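/- arXiv:math/0005235 — 6 statements merged into one kernel-verified Lean document; each statement's English description precedes it below -/
import Mathlib

section
/- Let Y be a random variable satisfying Y =_d U Y + (1-U) Z + g(U) with U uniform on (0,1), Z an independent copy of Y, and g(u) = 2u ln u + 2(1-u) ln(1-u) + 1. Then its characteristic function φ satisfies |φ(t)| ≤ 2 |t|^{-1/2} for all real t ≠ 0. -/
open Set Real MeasureTheory ProbabilityTheory

noncomputable section

lemma qs_ibp_bound {f f' f'' : ℝ → ℝ} {b c : ℝ} (hbc : b ≤ c)
    (hd : ∀ u ∈ Set.Icc b c, HasDerivAt f (f' u) u)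
    (hd' : ∀ u ∈ Set.Icc b c, HasDerivAt f' (f'' u) u)
    (hc'' : ContinuousOn f'' (Set.Icc b c))
    (hne : ∀ u ∈ Set.Icc b c, f' u ≠ 0)
    (hnn : ∀ u ∈ Set.Icc b c, 0 ≤ f'' u) :
    ‖∫ u in b..c, Complex.exp (Complex.I * f u)‖ ≤
      1 / |f' b| + 1 / |f' c| + (1 / f' b - 1 / f' c) := by
  have huIcc : Set.uIcc b c = Set.Icc b c := Set.uIcc_of_le hbc
  set F : ℝ → ℂ := fun u => Complex.exp (Complex.I * f u) with hF
  set G : ℝ → ℂ := fun u => F u * (Complex.I * f' u)⁻¹ with hG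
  set E : ℝ → ℂ := fun u => F u * (Complex.I * f'' u) * (((f' u : ℂ)) ^ 2)⁻¹ with hE
  have hcontf : ContinuousOn f (Set.Icc b c) := fun u hu => (hd u hu).continuousAt.continuousWithinAt
  have hcontf' : ContinuousOn f' (Set.Icc b c) := fun u hu => (hd' u hu).continuousAt.continuousWithinAt
  have hcontF : ContinuousOn F (Set.Icc b c) := by
    apply Complex.continuous_exp.comp_continuousOn
    exact (continuous_const.continuousOn.mul (Complex.continuous_ofReal.comp_continuousOn hcontf))
  have hcontE : ContinuousOn E (Set.Icc b c) := by
    apply ContinuousOn.mul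
    · exact hcontF.mul (continuous_const.continuousOn.mul
        (Complex.continuous_ofReal.comp_continuousOn hc''))
    · apply ContinuousOn.inv₀
      · exact ((Complex.continuous_ofReal.comp_continuousOn hcontf').pow 2)
      · exact fun u hu => pow_ne_zero 2 (Complex.ofReal_ne_zero.mpr (hne u hu))
  have hnormF : ∀ u : ℝ, ‖F u‖ = 1 := by
    intro u
    rw [hF]
    simp [Complex.norm_exp]
  have hdF : ∀ u ∈ Set.Icc b c, HasDerivAt F (F u * (Complex.I * f' u)) u := by
    intro u hu
    have h1 : HasDerivAt (fun x : ℝ => (f x : ℂ)) ((f' u : ℂ)) u := (hd u hu).ofReal_comp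
    have h2 : HasDerivAt (fun x : ℝ => Complex.I * (f x : ℂ)) (Complex.I * f' u) u := h1.const_mul _
    simpa [hF, mul_comm] using h2.cexp
  have hdG : ∀ u ∈ Set.Icc b c, HasDerivAt G (F u + E u) u := by
    intro u hu
    have h1 : HasDerivAt (fun x : ℝ => (f' x : ℂ)) ((f'' u : ℂ)) u := (hd' u hu).ofReal_comp
    have h2 : HasDerivAt (fun x : ℝ => Complex.I * (f' x : ℂ)) (Complex.I * f'' u) u := h1.const_mul _
    have hne' : (Complex.I * (f' u : ℂ)) ≠ 0 :=
      mul_ne_zero Complex.I_ne_zero (Complex.ofReal_ne_zero.mpr (hne u hu))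
    have h3 : HasDerivAt (fun x : ℝ => (Complex.I * (f' x : ℂ))⁻¹)
        (-((Complex.I * (f' u : ℂ)) ^ 2)⁻¹ * (Complex.I * f'' u)) u :=
      (hasDerivAt_inv hne').comp u h2
    have h4 := (hdF u hu).mul h3
    refine h4.congr_deriv ?_
    have hfne : (f' u : ℂ) ≠ 0 := Complex.ofReal_ne_zero.mpr (hne u hu)
    simp only [hE]
    field_simp
    linear_combination (-(F u * (f'' u : ℂ))) * Complex.I_sq
  have hIntFE : IntervalIntegrable (fun u => F u + E u) MeasureTheory.volume b c :=
    ((hcontF.add hcontE).mono (by rw [huIcc])).intervalIntegrable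
  have hIntF : IntervalIntegrable F MeasureTheory.volume b c :=
    (hcontF.mono (by rw [huIcc])).intervalIntegrable
  have hIntE : IntervalIntegrable E MeasureTheory.volume b c :=
    (hcontE.mono (by rw [huIcc])).intervalIntegrable
  have hFTC : ∫ u in b..c, (F u + E u) = G c - G b := by
    apply intervalIntegral.integral_eq_sub_of_hasDerivAt
    · intro u hu; exact hdG u (huIcc ▸ hu)
    · exact hIntFE
  have hsplit : ∫ u in b..c, F u = G c - G b - ∫ u in b..c, E u := by
    rw [← hFTC, intervalIntegral.integral_add hIntF hIntE]; ring
  have hfc2 : ∀ u ∈ Set.Icc b c, HasDerivAt (fun x => -(f' x)⁻¹) (f'' u / (f' u) ^ 2) u := by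
    intro u hu
    have := ((hd' u hu).inv (hne u hu)).neg
    refine this.congr_deriv ?_
    ring
  have hIntE2 : ∫ u in b..c, f'' u / (f' u) ^ 2 = 1 / f' b - 1 / f' c := by
    rw [intervalIntegral.integral_eq_sub_of_hasDerivAt (fun u hu => hfc2 u (huIcc ▸ hu))]
    · ring
    · apply ContinuousOn.intervalIntegrable
      rw [huIcc]
      exact hc''.div (hcontf'.pow 2) (fun u hu => pow_ne_zero 2 (hne u hu))
  have hnormIntE : ‖∫ u in b..c, E u‖ ≤ 1 / f' b - 1 / f' c := by
    rw [← hIntE2]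
    refine le_trans intervalIntegral.norm_integral_le_abs_integral_norm ?_
    have h2 : (∫ u in b..c, ‖E u‖) = ∫ u in b..c, f'' u / (f' u) ^ 2 := by
      apply intervalIntegral.integral_congr
      intro u hu
      rw [huIcc] at hu
      show ‖E u‖ = f'' u / (f' u) ^ 2
      rw [hE]
      simp only [norm_mul, hnormF, one_mul, norm_inv, norm_pow, Complex.norm_real,
        Real.norm_eq_abs, Complex.norm_I]
      rw [abs_of_nonneg (hnn u hu), sq_abs, div_eq_mul_inv]
    rw [h2]
    refine le_of_eq (abs_of_nonneg ?_)
    apply intervalIntegral.integral_nonneg hbc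
    intro u hu
    exact div_nonneg (hnn u hu) (sq_nonneg _)
  have hnormG : ∀ u ∈ Set.Icc b c, ‖G u‖ = 1 / |f' u| := by
    intro u hu
    rw [hG]
    simp only [norm_mul, hnormF, one_mul, norm_inv, Complex.norm_real,
      Real.norm_eq_abs, Complex.norm_I]
    exact (one_div _).symm
  calc ‖∫ u in b..c, F u‖ = ‖G c - G b - ∫ u in b..c, E u‖ := by rw [hsplit]
    _ ≤ ‖G c‖ + ‖G b‖ + ‖∫ u in b..c, E u‖ := by
        refine le_trans (norm_sub_le _ _) ?_
        gcongr
        exact norm_sub_le _ _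
    _ ≤ 1 / |f' b| + 1 / |f' c| + (1 / f' b - 1 / f' c) := by
        rw [hnormG c (Set.right_mem_Icc.mpr hbc), hnormG b (Set.left_mem_Icc.mpr hbc)]
        linarith [hnormIntE]


lemma qs_deriv (t y z : ℝ) {u : ℝ} (hu : u ∈ Set.Ioo (0:ℝ) 1) :
    HasDerivAt (fun x => t * (x*y + (1-x)*z + (2*x*Real.log x + 2*(1-x)*Real.log (1-x) + 1)))
      (t * ((y - z) + (2*Real.log u - 2*Real.log (1-u)))) u := by
  have hu0 : u ≠ 0 := ne_of_gt hu.1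
  have hu1 : (1:ℝ) - u ≠ 0 := sub_ne_zero.mpr (ne_of_gt hu.2)
  have hsub : HasDerivAt (fun x : ℝ => 1 - x) (-1) u := by
    simpa using (hasDerivAt_id u).const_sub 1
  have h3 : HasDerivAt (fun x : ℝ => x * Real.log x) (Real.log u + 1) u :=
    Real.hasDerivAt_mul_log hu0
  have h4 : HasDerivAt (fun x : ℝ => (1-x) * Real.log (1-x)) ((Real.log (1-u) + 1) * (-1)) u :=
    (Real.hasDerivAt_mul_log hu1).comp u hsub
  have h1 : HasDerivAt (fun x : ℝ => x * y) y u := by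
    simpa using (hasDerivAt_id u).mul_const y
  have h2 : HasDerivAt (fun x : ℝ => (1-x) * z) (-1 * z) u := hsub.mul_const z
  have hsum := (((h1.add h2).add (((h3.const_mul 2).add (h4.const_mul 2)).add_const 1)).const_mul t)
  have hsum2 := hsum.congr_of_eventuallyEq
    (f₁ := fun x : ℝ => t * (x*y + (1-x)*z + (2*x*Real.log x + 2*(1-x)*Real.log (1-x) + 1)))
    (Filter.Eventually.of_forall fun x => by simp only [Pi.add_apply]; ring)
  refine hsum2.congr_deriv ?_
  ring

lemma qs_deriv2 (t y z : ℝ) {u : ℝ} (hu : u ∈ Set.Ioo (0:ℝ) 1) :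
    HasDerivAt (fun x => t * ((y - z) + (2*Real.log x - 2*Real.log (1-x))))
      (t * (2*u⁻¹ + 2*(1-u)⁻¹)) u := by
  have hu0 : u ≠ 0 := ne_of_gt hu.1
  have hu1 : (1:ℝ) - u ≠ 0 := sub_ne_zero.mpr (ne_of_gt hu.2)
  have hsub : HasDerivAt (fun x : ℝ => 1 - x) (-1) u := by
    simpa using (hasDerivAt_id u).const_sub 1
  have hl1 : HasDerivAt (fun x : ℝ => Real.log x) u⁻¹ u := Real.hasDerivAt_log hu0
  have hl2 : HasDerivAt (fun x : ℝ => Real.log (1-x)) ((1-u)⁻¹ * (-1)) u :=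
    (Real.hasDerivAt_log hu1).comp u hsub
  have hsum := ((((hl1.const_mul 2).sub (hl2.const_mul 2)).const_add (y - z)).const_mul t)
  refine hsum.congr_deriv ?_
  ring

lemma qs_ell_deriv {x : ℝ} (hx : x ∈ Set.Ioo (0:ℝ) 1) :
    HasDerivAt (fun x => 2*Real.log x - 2*Real.log (1-x)) (2*x⁻¹ + 2*(1-x)⁻¹) x := by
  have hu0 : x ≠ 0 := ne_of_gt hx.1
  have hu1 : (1:ℝ) - x ≠ 0 := sub_ne_zero.mpr (ne_of_gt hx.2)
  have hsub : HasDerivAt (fun x : ℝ => 1 - x) (-1) x := by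
    simpa using (hasDerivAt_id x).const_sub 1
  have hl1 : HasDerivAt (fun x : ℝ => Real.log x) x⁻¹ x := Real.hasDerivAt_log hu0
  have hl2 : HasDerivAt (fun y : ℝ => Real.log (1-y)) ((1-x)⁻¹ * (-1)) x :=
    (Real.hasDerivAt_log hu1).comp x hsub
  have hsum := (hl1.const_mul 2).sub (hl2.const_mul 2)
  refine hsum.congr_deriv ?_
  ring

lemma qs_mvt {p q : ℝ} (hp : 0 < p) (hpq : p < q) (hq : q < 1) :
    8*(q - p) ≤ (2*Real.log q - 2*Real.log (1-q)) - (2*Real.log p - 2*Real.log (1-p)) := by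
  have hD : ∀ x ∈ Set.Ioo p q,
      HasDerivAt (fun x => 2*Real.log x - 2*Real.log (1-x)) (2*x⁻¹ + 2*(1-x)⁻¹) x :=
    fun x hx => qs_ell_deriv ⟨lt_trans hp hx.1, lt_trans hx.2 hq⟩
  have hC : ContinuousOn (fun x => 2*Real.log x - 2*Real.log (1-x)) (Set.Icc p q) := by
    intro x hx
    exact (qs_ell_deriv ⟨lt_of_lt_of_le hp hx.1, lt_of_le_of_lt hx.2 hq⟩).continuousAt.continuousWithinAt
  obtain ⟨ξ, hξ, hslope⟩ := exists_hasDerivAt_eq_slope (fun x => 2*Real.log x - 2*Real.log (1-x))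
    (fun x => 2*x⁻¹ + 2*(1-x)⁻¹) hpq hC hD
  have hξ0 : 0 < ξ := lt_trans hp hξ.1
  have hξ1 : ξ < 1 := lt_trans hξ.2 hq
  have hξ1' : 0 < 1 - ξ := by linarith
  have h8 : (8:ℝ) ≤ 2*ξ⁻¹ + 2*(1-ξ)⁻¹ := by
    have hkey : 2*ξ⁻¹ + 2*(1-ξ)⁻¹ - 8 = 2*(2*ξ-1)^2/(ξ*(1-ξ)) := by
      field_simp
      ring
    nlinarith [div_nonneg (by positivity : (0:ℝ) ≤ 2*(2*ξ-1)^2) (le_of_lt (mul_pos hξ0 hξ1')),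
      hkey]
  have hne : q - p ≠ 0 := ne_of_gt (sub_pos.mpr hpq)
  have heq : (2*Real.log q - 2*Real.log (1-q)) - (2*Real.log p - 2*Real.log (1-p))
      = (2*ξ⁻¹ + 2*(1-ξ)⁻¹) * (q - p) := by
    rw [hslope]
    field_simp
  rw [heq]
  have := sub_pos.mpr hpq
  nlinarith


def qsf (t y z u : ℝ) : ℝ := t * (u*y + (1-u)*z + (2*u*Real.log u + 2*(1-u)*Real.log (1-u) + 1))
def qsf' (t y z u : ℝ) : ℝ := t * ((y - z) + (2*Real.log u - 2*Real.log (1-u)))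
def qsf'' (t u : ℝ) : ℝ := t * (2*u⁻¹ + 2*(1-u)⁻¹)
def qsF (t y z u : ℝ) : ℂ := Complex.exp (Complex.I * (qsf t y z u : ℂ))

lemma qsf_hasDeriv (t y z : ℝ) {u : ℝ} (hu : u ∈ Set.Ioo (0:ℝ) 1) :
    HasDerivAt (fun x => qsf t y z x) (qsf' t y z u) u := qs_deriv t y z hu

lemma qsf'_hasDeriv (t y z : ℝ) {u : ℝ} (hu : u ∈ Set.Ioo (0:ℝ) 1) :
    HasDerivAt (fun x => qsf' t y z x) (qsf'' t u) u := qs_deriv2 t y z hu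

lemma qsF_norm (t y z u : ℝ) : ‖qsF t y z u‖ = 1 := by
  simp [qsF, Complex.norm_exp]

lemma qsF_meas (t y z : ℝ) : Measurable (qsF t y z) := by
  unfold qsF qsf
  apply Complex.measurable_exp.comp
  apply Measurable.const_mul
  apply Complex.measurable_ofReal.comp
  apply Measurable.const_mul
  apply Measurable.add
  · exact (measurable_id.mul_const y).add ((measurable_const.sub measurable_id).mul_const z)
  apply Measurable.add_const
  apply Measurable.add
  · exact (measurable_id.const_mul 2).mul Real.measurable_log
  · exact ((measurable_const.sub measurable_id).const_mul 2).mul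
      (Real.measurable_log.comp (measurable_const.sub measurable_id))

lemma qsF_intInt (t y z a b : ℝ) : IntervalIntegrable (qsF t y z) volume a b := by
  rw [intervalIntegrable_iff]
  apply Integrable.mono' (g := fun _ => (1:ℝ))
  · refine integrableOn_const ?_
    rw [Set.uIoc]
    simp [Real.volume_Ioc]
  · exact (qsF_meas t y z).aestronglyMeasurable
  · exact Filter.Eventually.of_forall (fun u => le_of_eq (qsF_norm t y z u))

lemma qs_ell_mono {p q : ℝ} (hp : 0 < p) (hpq : p ≤ q) (hq : q < 1) :
    2*Real.log p - 2*Real.log (1-p) ≤ 2*Real.log q - 2*Real.log (1-q) := by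
  have h1 : Real.log p ≤ Real.log q := (Real.log_le_log_iff hp (lt_of_lt_of_le hp hpq)).mpr hpq
  have h2 : Real.log (1-q) ≤ Real.log (1-p) :=
    (Real.log_le_log_iff (by linarith) (by linarith)).mpr (by linarith)
  linarith

lemma qsf''_nonneg {t u : ℝ} (ht : 0 < t) (hu : u ∈ Set.Ioo (0:ℝ) 1) : 0 ≤ qsf'' t u := by
  have h1 := hu.1
  have h2 : 0 < 1 - u := by linarith [hu.2]
  unfold qsf''
  positivity

lemma qsf''_contOn {t b s : ℝ} (h : Set.Icc b s ⊆ Set.Ioo (0:ℝ) 1) :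
    ContinuousOn (qsf'' t) (Set.Icc b s) := by
  unfold qsf''
  apply ContinuousOn.mul continuousOn_const
  apply ContinuousOn.add
  · exact continuousOn_const.mul (ContinuousOn.inv₀ continuousOn_id
      (fun u hu => ne_of_gt (h hu).1))
  · exact continuousOn_const.mul (ContinuousOn.inv₀
      ((continuous_const.sub continuous_id).continuousOn)
      (fun u hu => sub_ne_zero.mpr (ne_of_gt (h hu).2)))

lemma qs_right (t y z : ℝ) (ht : 0 < t) {b s : ℝ} (hb : 0 < b) (hbs : b ≤ s) (hs : s < 1)
    (hpos : 0 < qsf' t y z b) :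
    ‖∫ u in b..s, qsF t y z u‖ ≤ 2 / qsf' t y z b := by
  have hmem : Set.Icc b s ⊆ Set.Ioo (0:ℝ) 1 :=
    fun u hu => ⟨lt_of_lt_of_le hb hu.1, lt_of_le_of_lt hu.2 hs⟩
  have hposall : ∀ u ∈ Set.Icc b s, 0 < qsf' t y z u := by
    intro u hu
    have hu' := hmem hu
    have h := qs_ell_mono hb hu.1 hu'.2
    have h2 := mul_le_mul_of_nonneg_left (add_le_add_left h (y - z)) (le_of_lt ht)
    unfold qsf' at *
    linarith
  have hb' := qs_ibp_bound (f := qsf t y z) (f' := qsf' t y z) (f'' := qsf'' t) hbs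
    (fun u hu => qsf_hasDeriv t y z (hmem hu))
    (fun u hu => qsf'_hasDeriv t y z (hmem hu))
    (qsf''_contOn hmem)
    (fun u hu => ne_of_gt (hposall u hu))
    (fun u hu => qsf''_nonneg ht (hmem hu))
  rw [abs_of_pos (hposall b ⟨le_refl b, hbs⟩), abs_of_pos (hposall s ⟨hbs, le_refl s⟩)] at hb'
  calc ‖∫ u in b..s, qsF t y z u‖ ≤ _ := hb'
    _ = 2 / qsf' t y z b := by ring

lemma qs_left (t y z : ℝ) (ht : 0 < t) {r a : ℝ} (hr : 0 < r) (hra : r ≤ a) (ha : a < 1)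
    (hneg : qsf' t y z a < 0) :
    ‖∫ u in r..a, qsF t y z u‖ ≤ 2 / (-qsf' t y z a) := by
  have hmem : Set.Icc r a ⊆ Set.Ioo (0:ℝ) 1 :=
    fun u hu => ⟨lt_of_lt_of_le hr hu.1, lt_of_le_of_lt hu.2 ha⟩
  have hnegall : ∀ u ∈ Set.Icc r a, qsf' t y z u < 0 := by
    intro u hu
    have hu' := hmem hu
    have h := qs_ell_mono hu'.1 hu.2 ha
    have h2 := mul_le_mul_of_nonneg_left (add_le_add_left h (y - z)) (le_of_lt ht)
    unfold qsf' at *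
    linarith
  have hb' := qs_ibp_bound (f := qsf t y z) (f' := qsf' t y z) (f'' := qsf'' t) hra
    (fun u hu => qsf_hasDeriv t y z (hmem hu))
    (fun u hu => qsf'_hasDeriv t y z (hmem hu))
    (qsf''_contOn hmem)
    (fun u hu => ne_of_lt (hnegall u hu))
    (fun u hu => qsf''_nonneg ht (hmem hu))
  rw [abs_of_neg (hnegall r ⟨le_refl r, hra⟩), abs_of_neg (hnegall a ⟨hra, le_refl a⟩)] at hb'
  have hrne : qsf' t y z r ≠ 0 := ne_of_lt (hnegall r ⟨le_refl r, hra⟩)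
  have hane : qsf' t y z a ≠ 0 := ne_of_lt (hnegall a ⟨hra, le_refl a⟩)
  calc ‖∫ u in r..a, qsF t y z u‖ ≤ _ := hb'
    _ = 2 / (-qsf' t y z a) := by rw [div_neg, div_neg]; ring

lemma qs_osc (t y z : ℝ) (ht4 : 4 ≤ t) :
    ‖∫ u in Set.Ioo (0:ℝ) 1, qsF t y z u‖ ≤ 2 / Real.sqrt t := by
  have ht : 0 < t := by linarith
  have hst : 0 < Real.sqrt t := Real.sqrt_pos.mpr ht
  have hsq : Real.sqrt t * Real.sqrt t = t := Real.mul_self_sqrt (le_of_lt ht)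
  have hst2 : 2 ≤ Real.sqrt t := by nlinarith
  set δ : ℝ := 1/(2*Real.sqrt t) with hδdef
  have hδpos : 0 < δ := by positivity
  have hδ4 : δ ≤ 1/4 := by
    rw [hδdef, div_le_div_iff₀ (by positivity) (by norm_num)]
    linarith
  set c0 : ℝ := y - z with hc0
  set u₀ : ℝ := 1/(1+Real.exp (c0/2)) with hu₀def
  have hexp : 0 < Real.exp (c0/2) := Real.exp_pos _
  have hu₀1 : 0 < u₀ := by positivity
  have hu₀2 : u₀ < 1 := by
    rw [hu₀def, div_lt_one (by positivity)]
    linarith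
  have hkey : c0 = -(2*Real.log u₀ - 2*Real.log (1-u₀)) := by
    have h1u : 1 - u₀ = Real.exp (c0/2) * u₀ := by
      rw [hu₀def]
      field_simp
      ring
    rw [h1u, Real.log_mul (Real.exp_ne_zero _) (ne_of_gt hu₀1), Real.log_exp]
    ring
  have hf'eq : ∀ q : ℝ, qsf' t y z q =
      t * ((2*Real.log q - 2*Real.log (1-q)) - (2*Real.log u₀ - 2*Real.log (1-u₀))) := by
    intro q
    unfold qsf'
    rw [← hc0, hkey]
    ring
  set A := max 0 (u₀ - δ) with hAdef
  set B := min 1 (u₀ + δ) with hBdef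
  have hA0 : 0 ≤ A := le_max_left _ _
  have hAu : A ≤ u₀ := max_le (le_of_lt hu₀1) (by linarith)
  have hBu : u₀ ≤ B := le_min (le_of_lt hu₀2) (by linarith)
  have hAB : A ≤ B := le_trans hAu hBu
  have hB1 : B ≤ 1 := min_le_left _ _
  have hsplit : ∫ u in Set.Ioo (0:ℝ) 1, qsF t y z u
      = ((∫ u in (0:ℝ)..A, qsF t y z u) + ∫ u in A..B, qsF t y z u)
        + ∫ u in B..1, qsF t y z u := by
    calc ∫ u in Set.Ioo (0:ℝ) 1, qsF t y z u = ∫ u in (0:ℝ)..1, qsF t y z u := by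
          rw [intervalIntegral.integral_of_le (by norm_num : (0:ℝ) ≤ 1),
            MeasureTheory.integral_Ioc_eq_integral_Ioo]
      _ = (∫ u in (0:ℝ)..B, qsF t y z u) + ∫ u in B..1, qsF t y z u :=
          (intervalIntegral.integral_add_adjacent_intervals
            (qsF_intInt t y z 0 B) (qsF_intInt t y z B 1)).symm
      _ = ((∫ u in (0:ℝ)..A, qsF t y z u) + ∫ u in A..B, qsF t y z u)
            + ∫ u in B..1, qsF t y z u := by
          rw [intervalIntegral.integral_add_adjacent_intervals
            (qsF_intInt t y z 0 A) (qsF_intInt t y z A B)]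
  have hmid : ‖∫ u in A..B, qsF t y z u‖ ≤ 1 / Real.sqrt t := by
    have h := intervalIntegral.norm_integral_le_of_norm_le_const
      (C := 1) (a := A) (b := B) (f := qsF t y z)
      (fun u _ => le_of_eq (qsF_norm t y z u))
    have hBle : B ≤ u₀ + δ := min_le_right _ _
    have hAge : u₀ - δ ≤ A := le_max_right _ _
    have hBA : |B - A| ≤ 2*δ := by
      rw [abs_of_nonneg (by linarith)]
      linarith
    have h2 : (1:ℝ) * |B - A| ≤ 2*δ := by rw [one_mul]; exact hBA
    have h3 : 2*δ = 1/Real.sqrt t := by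
      rw [hδdef]
      field_simp
    linarith [le_trans h h2]
  have hright : ‖∫ u in B..1, qsF t y z u‖ ≤ 1/(2*Real.sqrt t) := by
    rcases le_or_gt 1 (u₀ + δ) with hc | hc
    · have hB1' : B = 1 := min_eq_left hc
      rw [hB1', intervalIntegral.integral_same, norm_zero]
      positivity
    · have hBeq : B = u₀ + δ := min_eq_right (le_of_lt hc)
      have hB0 : 0 < B := by rw [hBeq]; positivity
      have hBlt1 : B < 1 := by rw [hBeq]; exact hc
      have hf'B : 4 * Real.sqrt t ≤ qsf' t y z B := by
        rw [hf'eq B]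
        have hm := qs_mvt hu₀1 (show u₀ < B by rw [hBeq]; linarith) hBlt1
        have hd : B - u₀ = δ := by rw [hBeq]; ring
        rw [hd] at hm
        have h2 := mul_le_mul_of_nonneg_left hm (le_of_lt ht)
        have ht8 : t * (8*δ) = 4*Real.sqrt t := by
          rw [hδdef]
          rw [show t * (8*(1/(2*Real.sqrt t))) = 4*(t/Real.sqrt t) by ring, Real.div_sqrt]
        linarith
      have hf'Bpos : 0 < qsf' t y z B := lt_of_lt_of_le (by positivity) hf'B
      apply le_of_forall_pos_le_add
      intro ε hε
      set s := max B (1 - min ε ((1-B)/2)) with hsdef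
      have hsB : B ≤ s := le_max_left _ _
      have hs1 : s < 1 := by
        rw [hsdef]
        apply max_lt hBlt1
        have : 0 < min ε ((1-B)/2) := lt_min hε (by linarith)
        linarith
      have h1s : 1 - s ≤ ε := by
        have h1 : 1 - min ε ((1-B)/2) ≤ s := le_max_right _ _
        have h2 : min ε ((1-B)/2) ≤ ε := min_le_left _ _
        linarith
      have hsplit2 : ∫ u in B..1, qsF t y z u
          = (∫ u in B..s, qsF t y z u) + ∫ u in s..1, qsF t y z u :=
        (intervalIntegral.integral_add_adjacent_intervals
          (qsF_intInt t y z B s) (qsF_intInt t y z s 1)).symm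
      rw [hsplit2]
      have hp1 : ‖∫ u in B..s, qsF t y z u‖ ≤ 2 / qsf' t y z B :=
        qs_right t y z ht hB0 hsB hs1 hf'Bpos
      have hp2 : ‖∫ u in s..1, qsF t y z u‖ ≤ 1 * |1 - s| :=
        intervalIntegral.norm_integral_le_of_norm_le_const
          (fun u _ => le_of_eq (qsF_norm t y z u))
      have hp2' : ‖∫ u in s..1, qsF t y z u‖ ≤ ε := by
        rw [one_mul, abs_of_nonneg (by linarith)] at hp2
        linarith
      have hp1' : 2 / qsf' t y z B ≤ 1/(2*Real.sqrt t) := by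
        have h4 : 2 / qsf' t y z B ≤ 2/(4*Real.sqrt t) := by
          apply div_le_div_of_nonneg_left (by norm_num) (by positivity) hf'B
        have h5 : 2/(4*Real.sqrt t) = 1/(2*Real.sqrt t) := by ring
        linarith
      calc ‖(∫ u in B..s, qsF t y z u) + ∫ u in s..1, qsF t y z u‖
          ≤ ‖∫ u in B..s, qsF t y z u‖ + ‖∫ u in s..1, qsF t y z u‖ := norm_add_le _ _
        _ ≤ 1/(2*Real.sqrt t) + ε := by linarith
  have hleft : ‖∫ u in (0:ℝ)..A, qsF t y z u‖ ≤ 1/(2*Real.sqrt t) := by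
    rcases le_or_gt (u₀ - δ) 0 with hc | hc
    · have hA0' : A = 0 := max_eq_left hc
      rw [hA0', intervalIntegral.integral_same, norm_zero]
      positivity
    · have hAeq : A = u₀ - δ := max_eq_right (le_of_lt hc)
      have hA0' : 0 < A := by rw [hAeq]; exact hc
      have hAlt1 : A < 1 := lt_of_le_of_lt hAu hu₀2
      have hf'A : qsf' t y z A ≤ -(4*Real.sqrt t) := by
        rw [hf'eq A]
        have hm := qs_mvt hA0' (show A < u₀ by rw [hAeq]; linarith) hu₀2
        have hd : u₀ - A = δ := by rw [hAeq]; ring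
        rw [hd] at hm
        have h2 := mul_le_mul_of_nonneg_left hm (le_of_lt ht)
        have ht8 : t * (8*δ) = 4*Real.sqrt t := by
          rw [hδdef]
          rw [show t * (8*(1/(2*Real.sqrt t))) = 4*(t/Real.sqrt t) by ring, Real.div_sqrt]
        nlinarith
      have hf'Aneg : qsf' t y z A < 0 := lt_of_le_of_lt hf'A (by linarith)
      apply le_of_forall_pos_le_add
      intro ε hε
      set r := min A ε with hrdef
      have hr0 : 0 < r := lt_min hA0' hε
      have hrA : r ≤ A := min_le_left _ _
      have hsplit2 : ∫ u in (0:ℝ)..A, qsF t y z u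
          = (∫ u in (0:ℝ)..r, qsF t y z u) + ∫ u in r..A, qsF t y z u :=
        (intervalIntegral.integral_add_adjacent_intervals
          (qsF_intInt t y z 0 r) (qsF_intInt t y z r A)).symm
      rw [hsplit2]
      have hp1 : ‖∫ u in (0:ℝ)..r, qsF t y z u‖ ≤ 1 * |r - 0| :=
        intervalIntegral.norm_integral_le_of_norm_le_const
          (fun u _ => le_of_eq (qsF_norm t y z u))
      have hp1' : ‖∫ u in (0:ℝ)..r, qsF t y z u‖ ≤ ε := by
        rw [one_mul, sub_zero, abs_of_nonneg (le_of_lt hr0)] at hp1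
        exact le_trans hp1 (min_le_right _ _)
      have hp2 : ‖∫ u in r..A, qsF t y z u‖ ≤ 2 / (-qsf' t y z A) :=
        qs_left t y z ht hr0 hrA hAlt1 hf'Aneg
      have hp2' : 2 / (-qsf' t y z A) ≤ 1/(2*Real.sqrt t) := by
        have h4 : 2 / (-qsf' t y z A) ≤ 2/(4*Real.sqrt t) := by
          apply div_le_div_of_nonneg_left (by norm_num) (by positivity) (by linarith)
        have h5 : 2/(4*Real.sqrt t) = 1/(2*Real.sqrt t) := by ring
        linarith
      calc ‖(∫ u in (0:ℝ)..r, qsF t y z u) + ∫ u in r..A, qsF t y z u‖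
          ≤ ‖∫ u in (0:ℝ)..r, qsF t y z u‖ + ‖∫ u in r..A, qsF t y z u‖ := norm_add_le _ _
        _ ≤ 1/(2*Real.sqrt t) + ε := by linarith
  rw [hsplit]
  have hfinal : 1/(2*Real.sqrt t) + 1/Real.sqrt t + 1/(2*Real.sqrt t) = 2/Real.sqrt t := by
    field_simp
    ring
  calc ‖((∫ u in (0:ℝ)..A, qsF t y z u) + ∫ u in A..B, qsF t y z u)
        + ∫ u in B..1, qsF t y z u‖
      ≤ ‖(∫ u in (0:ℝ)..A, qsF t y z u) + ∫ u in A..B, qsF t y z u‖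
        + ‖∫ u in B..1, qsF t y z u‖ := norm_add_le _ _
    _ ≤ ‖∫ u in (0:ℝ)..A, qsF t y z u‖ + ‖∫ u in A..B, qsF t y z u‖
        + ‖∫ u in B..1, qsF t y z u‖ := by
        have := norm_add_le (∫ u in (0:ℝ)..A, qsF t y z u) (∫ u in A..B, qsF t y z u)
        linarith
    _ ≤ 2/Real.sqrt t := by
        rw [← hfinal]
        linarith [hleft, hmid, hright]


lemma qs_osc' (t y z : ℝ) (h4 : 4 ≤ |t|) :
    ‖∫ u in Set.Ioo (0:ℝ) 1, Complex.exp (Complex.I * (t:ℂ) *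
        ((u * y + (1 - u) * z + (2*u*Real.log u + 2*(1-u)*Real.log (1-u) + 1) : ℝ) : ℂ))‖
      ≤ 2 / Real.sqrt |t| := by
  rcases lt_trichotomy t 0 with hneg | h0 | hpos
  · have habs : |t| = -t := abs_of_neg hneg
    have hcong : ∀ u : ℝ, Complex.exp (Complex.I * (t:ℂ) *
        ((u * y + (1 - u) * z + (2*u*Real.log u + 2*(1-u)*Real.log (1-u) + 1) : ℝ) : ℂ))
        = (starRingEnd ℂ) (qsF (-t) y z u) := by
      intro u
      unfold qsF qsf
      rw [← Complex.exp_conj]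
      congr 1
      simp only [map_mul, Complex.conj_I, Complex.conj_ofReal]
      push_cast
      ring
    simp only [hcong]
    rw [integral_conj, RCLike.norm_conj, habs]
    apply qs_osc (-t) y z
    rw [habs] at h4
    exact h4
  · exfalso
    rw [h0] at h4
    norm_num at h4
  · have habs : |t| = t := abs_of_pos hpos
    have hcong : ∀ u : ℝ, Complex.exp (Complex.I * (t:ℂ) *
        ((u * y + (1 - u) * z + (2*u*Real.log u + 2*(1-u)*Real.log (1-u) + 1) : ℝ) : ℂ))
        = qsF t y z u := by
      intro u
      unfold qsF qsf
      congr 1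
      push_cast
      ring
    simp only [hcong]
    rw [habs]
    apply qs_osc t y z
    rw [habs] at h4
    exact h4

end


theorem quicksort_charfun_half_bound
    {Ω : Type*} [MeasurableSpace Ω] (μ : Measure Ω) [IsProbabilityMeasure μ]
    (Y Z U : Ω → ℝ) (hY : Measurable Y) (hZ : Measurable Z) (hU : Measurable U)
    (g : ℝ → ℝ)
    (hg : ∀ u : ℝ, g u = 2 * u * Real.log u + 2 * (1 - u) * Real.log (1 - u) + 1)
    (hindep : iIndepFun ![Y, Z, U] μ)
    (hZY : Measure.map Z μ = Measure.map Y μ)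
    (hUunif : Measure.map U μ = volume.restrict (Ioo (0:ℝ) 1))
    (hfix : Measure.map (fun ω => U ω * Y ω + (1 - U ω) * Z ω + g (U ω)) μ
            = Measure.map Y μ)
    (φ : ℝ → ℂ)
    (hφ : ∀ t : ℝ, φ t = ∫ ω, Complex.exp (Complex.I * t * Y ω) ∂μ) :
    ∀ t : ℝ, t ≠ 0 → ‖φ t‖ ≤ 2 * |t| ^ (-(1/2) : ℝ) := by
  intro t ht
  have habs0 : 0 < |t| := abs_pos.mpr ht
  have hst : 0 < Real.sqrt |t| := Real.sqrt_pos.mpr habs0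
  have hrhs : 2 * |t| ^ (-(1/2) : ℝ) = 2 / Real.sqrt |t| := by
    rw [Real.rpow_neg (abs_nonneg t), Real.sqrt_eq_rpow]
    exact (div_eq_mul_inv _ _).symm
  rw [hrhs]
  have hnorm1 : ∀ x : ℝ, ‖Complex.exp (Complex.I * t * (x:ℂ))‖ = 1 := by
    intro x
    simp [Complex.norm_exp, Complex.mul_re, Complex.I_re, Complex.I_im,
      Complex.ofReal_re, Complex.ofReal_im]
  rcases lt_or_ge |t| 4 with h4 | h4
  · have h1 : ‖φ t‖ ≤ 1 := by
      rw [hφ t]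
      have h := MeasureTheory.norm_integral_le_of_norm_le_const (μ := μ) (C := 1)
        (f := fun ω => Complex.exp (Complex.I * t * (Y ω : ℂ)))
        (ae_of_all _ fun ω => le_of_eq (hnorm1 (Y ω)))
      simpa [measure_univ] using h
    have h2 : Real.sqrt |t| ≤ 2 := by
      nlinarith [Real.sq_sqrt (abs_nonneg t), hst]
    calc ‖φ t‖ ≤ 1 := h1
      _ ≤ 2 / Real.sqrt |t| := by
          rw [le_div_iff₀ hst]
          linarith
  · have hgm : Measurable g := by
      have hgeq : g = fun u => 2*u*Real.log u + 2*(1-u)*Real.log (1-u) + 1 := funext hg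
      rw [hgeq]
      exact (((measurable_id.const_mul 2).mul Real.measurable_log).add
        (((measurable_const.sub measurable_id).const_mul 2).mul
          (Real.measurable_log.comp (measurable_const.sub measurable_id)))).add_const 1
    set X : Ω → ℝ := fun ω => U ω * Y ω + (1 - U ω) * Z ω + g (U ω) with hX
    have hXm : Measurable X := ((hU.mul hY).add ((measurable_const.sub hU).mul hZ)).add
      (hgm.comp hU)
    have hexpc : Continuous (fun x : ℝ => Complex.exp (Complex.I * t * (x:ℂ))) :=
      Complex.continuous_exp.comp (continuous_const.mul Complex.continuous_ofReal)
    have e1 : ∫ x : ℝ, Complex.exp (Complex.I * t * (x:ℂ)) ∂(μ.map Y)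
        = ∫ ω, Complex.exp (Complex.I * t * (Y ω : ℂ)) ∂μ :=
      MeasureTheory.integral_map hY.aemeasurable hexpc.aestronglyMeasurable
    have e2 : ∫ x : ℝ, Complex.exp (Complex.I * t * (x:ℂ)) ∂(μ.map X)
        = ∫ ω, Complex.exp (Complex.I * t * (X ω : ℂ)) ∂μ :=
      MeasureTheory.integral_map hXm.aemeasurable hexpc.aestronglyMeasurable
    have h1 : φ t = ∫ ω, Complex.exp (Complex.I * t * (X ω : ℂ)) ∂μ := by
      rw [hφ t, ← e1, ← hfix, e2]
    set V : Ω → ℝ × ℝ := fun ω => (Y ω, Z ω) with hV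
    have hVm : Measurable V := hY.prodMk hZ
    have hmeas3 : ∀ i, Measurable (![Y, Z, U] i) := by
      intro i
      fin_cases i
      · exact hY
      · exact hZ
      · exact hU
    have hIndep : IndepFun V U μ := by
      have h := hindep.indepFun_prodMk hmeas3 0 1 2 (by decide) (by decide)
      simpa using h
    have hmapeq : μ.map (fun ω => (V ω, U ω)) = (μ.map V).prod (μ.map U) :=
      (ProbabilityTheory.indepFun_iff_map_prod_eq_prod_map_map hVm.aemeasurable
        hU.aemeasurable).mp hIndep
    have hrealm : Measurable (fun p : (ℝ × ℝ) × ℝ =>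
        p.2 * p.1.1 + (1 - p.2) * p.1.2 + g p.2) :=
      ((measurable_snd.mul (measurable_fst.comp measurable_fst)).add
        ((measurable_const.sub measurable_snd).mul (measurable_snd.comp measurable_fst))).add
        (hgm.comp measurable_snd)
    have hΦm : Measurable (fun p : (ℝ × ℝ) × ℝ =>
        Complex.exp (Complex.I * t * ((p.2 * p.1.1 + (1 - p.2) * p.1.2 + g p.2 : ℝ) : ℂ))) :=
      Complex.measurable_exp.comp ((Complex.measurable_ofReal.comp hrealm).const_mul
        (Complex.I * t))
    have h2 : ∫ ω, Complex.exp (Complex.I * t * (X ω : ℂ)) ∂μ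
        = ∫ p : (ℝ × ℝ) × ℝ, Complex.exp (Complex.I * t *
            ((p.2 * p.1.1 + (1 - p.2) * p.1.2 + g p.2 : ℝ) : ℂ))
            ∂((μ.map V).prod (μ.map U)) := by
      rw [← hmapeq,
        MeasureTheory.integral_map ((hVm.prodMk hU)).aemeasurable hΦm.aestronglyMeasurable]
    haveI hPV : IsProbabilityMeasure (μ.map V) := Measure.isProbabilityMeasure_map hVm.aemeasurable
    haveI hPU : IsProbabilityMeasure (μ.map U) := Measure.isProbabilityMeasure_map hU.aemeasurable
    have hΦint : Integrable (fun p : (ℝ × ℝ) × ℝ =>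
        Complex.exp (Complex.I * t * ((p.2 * p.1.1 + (1 - p.2) * p.1.2 + g p.2 : ℝ) : ℂ)))
        ((μ.map V).prod (μ.map U)) := by
      apply Integrable.mono' (integrable_const (1:ℝ)) hΦm.aestronglyMeasurable
      exact ae_of_all _ fun p => le_of_eq (hnorm1 _)
    have h3 : ∫ p : (ℝ × ℝ) × ℝ, Complex.exp (Complex.I * t *
          ((p.2 * p.1.1 + (1 - p.2) * p.1.2 + g p.2 : ℝ) : ℂ)) ∂((μ.map V).prod (μ.map U))
        = ∫ v, (∫ u, Complex.exp (Complex.I * t *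
            ((u * v.1 + (1 - u) * v.2 + g u : ℝ) : ℂ)) ∂(μ.map U)) ∂(μ.map V) :=
      MeasureTheory.integral_prod _ hΦint
    have hinner : ∀ v : ℝ × ℝ, ‖∫ u, Complex.exp (Complex.I * t *
        ((u * v.1 + (1 - u) * v.2 + g u : ℝ) : ℂ)) ∂(μ.map U)‖ ≤ 2 / Real.sqrt |t| := by
      intro v
      rw [hUunif]
      have hcong : ∀ u : ℝ, Complex.exp (Complex.I * t *
          ((u * v.1 + (1 - u) * v.2 + g u : ℝ) : ℂ))
          = Complex.exp (Complex.I * (t:ℂ) *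
            ((u * v.1 + (1 - u) * v.2 + (2*u*Real.log u + 2*(1-u)*Real.log (1-u) + 1) : ℝ) : ℂ)) := by
        intro u
        rw [hg u]
      simp only [hcong]
      exact qs_osc' t v.1 v.2 h4
    rw [h1, h2, h3]
    have h := MeasureTheory.norm_integral_le_of_norm_le_const (μ := μ.map V)
      (C := 2 / Real.sqrt |t|) (ae_of_all _ hinner)
    simpa [measure_univ] using h
end

section
/- Suppose φ : ℝ → ℂ satisfies |φ(t)| ≤ ∫_0^1 |φ(ut)| |φ((1-u)t)| du for all t, and suppose |φ(t)| ≤ c_p |t|^{-p} for all t ≠ 0, where 0 < p < 1 and c_p > 0. Then |φ(t)| ≤ (Γ(1-p)² / Γ(2-2p)) c_p² |t|^{-2p} for all t ≠ 0. -/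
open Set Real MeasureTheory

theorem charfun_bound_doubling
    (φ : ℝ → ℂ) (p c : ℝ) (hp0 : 0 < p) (hp1 : p < 1) (hc : 0 < c)
    (hineq : ∀ t : ℝ, ‖φ t‖ ≤ ∫ u in Ioo (0:ℝ) 1, ‖φ (u * t)‖ * ‖φ ((1 - u) * t)‖)
    (hbd : ∀ t : ℝ, t ≠ 0 → ‖φ t‖ ≤ c * |t| ^ (-p)) :
    ∀ t : ℝ, t ≠ 0 →
      ‖φ t‖ ≤ (Real.Gamma (1 - p))^2 / Real.Gamma (2 - 2*p) * c^2 * |t| ^ (-(2*p)) := by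
  have hs : (0:ℝ) < ((1 - p : ℝ) : ℂ).re := by simpa using by linarith
  set s : ℂ := ((1 - p : ℝ) : ℂ) with hsdef
  set g : ℝ → ℝ := fun u => u ^ (-p) * (1 - u) ^ (-p) with hgdef
  set fC : ℝ → ℂ := fun x => (x:ℂ) ^ (s - 1) * (1 - (x:ℂ)) ^ (s - 1) with hfCdef
  have hsne : s - 1 ≠ 0 := by
    intro h
    have : (s - 1).re = 0 := by rw [h]; simp
    simp [hsdef] at this
    linarith
  -- equality of integrands on [0,1]
  have heq : ∀ x ∈ Icc (0:ℝ) 1, fC x = ((g x : ℝ) : ℂ) := by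
    intro x hx
    rcases eq_or_lt_of_le hx.1 with h0 | h0
    · simp [hfCdef, hgdef, ← h0, Complex.zero_cpow hsne,
        Real.zero_rpow (neg_ne_zero.mpr hp0.ne')]
    rcases eq_or_lt_of_le hx.2 with h1 | h1
    · simp [hfCdef, hgdef, h1, Complex.zero_cpow hsne,
        Real.zero_rpow (neg_ne_zero.mpr hp0.ne')]
    have hs1 : s - 1 = ((-p : ℝ) : ℂ) := by
      rw [hsdef]; push_cast; ring
    have e1 : (x:ℂ) ^ (s - 1) = ((x ^ (-p) : ℝ) : ℂ) := by
      rw [hs1, Complex.ofReal_cpow h0.le]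
    have e2 : (1 - (x:ℂ)) ^ (s - 1) = (((1 - x) ^ (-p) : ℝ) : ℂ) := by
      rw [hs1, Complex.ofReal_cpow (by linarith)]
      push_cast; ring_nf
    simp [hfCdef, hgdef, e1, e2]
  -- beta integral value
  have hGammapos : 0 < Real.Gamma (2 - 2*p) := Real.Gamma_pos_of_pos (by linarith)
  have hbetaval : ∫ x in Ioo (0:ℝ) 1, g x
      = (Real.Gamma (1 - p))^2 / Real.Gamma (2 - 2*p) := by
    have hb := Complex.Gamma_mul_Gamma_eq_betaIntegral hs hs
    have hss : s + s = ((2 - 2*p : ℝ) : ℂ) := by push_cast [hsdef]; ring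
    have hGne : Complex.Gamma (s + s) ≠ 0 := by
      rw [hss, Complex.Gamma_ofReal]
      exact_mod_cast hGammapos.ne'
    have hbi : Complex.betaIntegral s s
        = ((Real.Gamma (1 - p))^2 / Real.Gamma (2 - 2*p) : ℝ) := by
      have : Complex.betaIntegral s s = Complex.Gamma s * Complex.Gamma s / Complex.Gamma (s+s) := by
        rw [eq_div_iff hGne, hb]; ring
      rw [this, hss, hsdef, Complex.Gamma_ofReal, Complex.Gamma_ofReal]
      push_cast; ring
    have hbi2 : Complex.betaIntegral s s = ((∫ x in (0:ℝ)..1, g x : ℝ) : ℂ) := by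
      rw [Complex.betaIntegral, ← intervalIntegral.integral_ofReal]
      refine intervalIntegral.integral_congr ?_
      intro x hx
      rw [uIcc_of_le zero_le_one] at hx
      exact heq x hx
    have : ((∫ x in (0:ℝ)..1, g x : ℝ) : ℂ)
        = ((Real.Gamma (1 - p))^2 / Real.Gamma (2 - 2*p) : ℝ) := by
      rw [← hbi2, hbi]
    have hreal : ∫ x in (0:ℝ)..1, g x = (Real.Gamma (1 - p))^2 / Real.Gamma (2 - 2*p) :=
      Complex.ofReal_injective this
    rw [← hreal, intervalIntegral.integral_of_le zero_le_one,
      MeasureTheory.integral_Ioc_eq_integral_Ioo]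
  -- integrability of g on Ioo 0 1
  have hfCint : IntegrableOn fC (Ioo (0:ℝ) 1) := by
    have := (Complex.betaIntegral_convergent hs hs)
    rw [intervalIntegrable_iff_integrableOn_Ioo_of_le zero_le_one] at this
    exact this
  have hgint : IntegrableOn g (Ioo (0:ℝ) 1) := by
    refine (Integrable.re hfCint).congr ?_
    refine (ae_restrict_iff' measurableSet_Ioo).mpr (ae_of_all _ ?_)
    intro x hx
    show RCLike.re (fC x) = g x
    rw [heq x (Ioo_subset_Icc_self hx)]
    simp
  intro t ht
  have ht' : 0 < |t| := abs_pos.mpr ht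
  set B := (Real.Gamma (1 - p))^2 / Real.Gamma (2 - 2*p) with hB
  set G : ℝ → ℝ := fun u => c^2 * |t| ^ (-(2*p)) * g u with hGdef
  have hGint : IntegrableOn G (Ioo (0:ℝ) 1) := hgint.const_mul _
  have htt : |t| ^ (-p) * |t| ^ (-p) = |t| ^ (-(2*p)) := by
    rw [← Real.rpow_add ht']; ring_nf
  have hmono : ∫ u in Ioo (0:ℝ) 1, ‖φ (u * t)‖ * ‖φ ((1 - u) * t)‖
      ≤ ∫ u in Ioo (0:ℝ) 1, G u := by
    refine integral_mono_of_nonneg (ae_of_all _ fun u => by positivity) hGint ?_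
    refine (ae_restrict_iff' measurableSet_Ioo).mpr (ae_of_all _ ?_)
    intro u hu
    have hu1 : (0:ℝ) < 1 - u := by linarith [hu.2]
    have h1 : ‖φ (u * t)‖ ≤ c * |u * t| ^ (-p) :=
      hbd _ (mul_ne_zero hu.1.ne' ht)
    have h2 : ‖φ ((1 - u) * t)‖ ≤ c * |(1 - u) * t| ^ (-p) :=
      hbd _ (mul_ne_zero hu1.ne' ht)
    have hle : ‖φ (u * t)‖ * ‖φ ((1 - u) * t)‖
        ≤ (c * |u * t| ^ (-p)) * (c * |(1 - u) * t| ^ (-p)) :=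
      mul_le_mul h1 h2 (norm_nonneg _) (by positivity)
    refine hle.trans_eq ?_
    rw [hGdef, hgdef, abs_mul, abs_mul, abs_of_pos hu.1, abs_of_pos hu1,
      Real.mul_rpow hu.1.le (abs_nonneg t), Real.mul_rpow hu1.le (abs_nonneg t),
      ← htt]
    ring
  have hGval : ∫ u in Ioo (0:ℝ) 1, G u = B * c^2 * |t| ^ (-(2*p)) := by
    rw [hGdef]
    rw [MeasureTheory.integral_const_mul, hbetaval]
    ring
  calc ‖φ t‖ ≤ _ := hineq t
    _ ≤ ∫ u in Ioo (0:ℝ) 1, G u := hmono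
    _ = B * c^2 * |t| ^ (-(2*p)) := hGval
end

section
/- Suppose φ : ℝ → ℂ satisfies |φ(t)| ≤ 1 for all t, |φ(t)| ≤ ∫_0^1 |φ(ut)| |φ((1-u)t)| du for all t > 0, and |φ(t)| ≤ c_p t^{-p} for all t > 0, where p > 1 and c_p > 0. Then |φ(t)| ≤ 2^{p+1} c_p^{1+1/p} (p/(p-1)) t^{-(p+1)} for all t > 0. -/
open Set Real MeasureTheory

theorem charfun_bound_increment
    (φ : ℝ → ℂ) (p c : ℝ) (hp : 1 < p) (hc : 0 < c)
    (hbd1 : ∀ t : ℝ, ‖φ t‖ ≤ 1)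
    (hineq : ∀ t : ℝ, 0 < t →
      ‖φ t‖ ≤ ∫ u in Ioo (0:ℝ) 1, ‖φ (u * t)‖ * ‖φ ((1 - u) * t)‖)
    (hbd : ∀ t : ℝ, 0 < t → ‖φ t‖ ≤ c * t ^ (-p)) :
    ∀ t : ℝ, 0 < t →
      ‖φ t‖ ≤ 2 ^ (p + 1) * c ^ (1 + 1/p) * (p / (p - 1)) * t ^ (-(p + 1)) := by
  intro t ht
  have hp0 : (0:ℝ) < p := lt_trans one_pos hp
  have hp1 : (0:ℝ) < p - 1 := sub_pos.mpr hp
  have hRHS : 0 ≤ 2 ^ (p + 1) * c ^ (1 + 1/p) * (p / (p - 1)) * t ^ (-(p + 1)) := by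
    positivity
  have h1 := hineq t ht
  by_cases hI : IntegrableOn (fun u => ‖φ (u * t)‖ * ‖φ ((1 - u) * t)‖) (Ioo (0:ℝ) 1) volume
  swap
  · rw [MeasureTheory.integral_undef hI] at h1
    linarith
  -- definitions
  set a : ℝ := c ^ (1/p) / t with ha_def
  have ha : 0 < a := div_pos (rpow_pos_of_pos hc _) ht
  set h : ℝ → ℝ := fun u => min 1 (c * (u * t) ^ (-p)) with hh_def
  set C : ℝ := c * 2 ^ p * t ^ (-p) with hC_def
  have hC : 0 < C := by positivity
  have hmeas : Measurable h :=
    measurable_const.min (((measurable_id.mul_const t).pow measurable_const).const_mul c)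
  have hnn : ∀ u : ℝ, 0 < u → 0 ≤ h u := fun u hu =>
    le_min zero_le_one (by positivity)
  have hle1 : ∀ u : ℝ, h u ≤ 1 := fun u => min_le_left _ _
  -- φ bounds via h and C
  have hφh : ∀ u : ℝ, 0 < u → ‖φ (u * t)‖ ≤ h u := fun u hu =>
    le_min (hbd1 _) (hbd _ (mul_pos hu ht))
  have hφC : ∀ u : ℝ, 1/2 ≤ u → ‖φ (u * t)‖ ≤ C := by
    intro u hu
    have hut : 0 < u * t := mul_pos (lt_of_lt_of_le (by norm_num) hu) ht
    refine (hbd _ hut).trans ?_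
    have h2 : (t/2 : ℝ) ≤ u * t := by nlinarith
    have := rpow_le_rpow_of_nonpos (by positivity : (0:ℝ) < t/2) h2 (by linarith : -p ≤ 0)
    calc c * (u*t) ^ (-p) ≤ c * (t/2) ^ (-p) := by
          exact mul_le_mul_of_nonneg_left this hc.le
      _ = C := by
          rw [hC_def, div_rpow ht.le (by norm_num), Real.rpow_neg (by norm_num : (0:ℝ) ≤ 2)]
          field_simp
  -- integrability of h on Ioc x y with 0 ≤ x
  have hInt : ∀ x y : ℝ, 0 ≤ x → IntegrableOn h (Ioc x y) volume := by
    intro x y hx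
    apply Measure.integrableOn_of_bounded measure_Ioc_lt_top.ne hmeas.aestronglyMeasurable
    · filter_upwards [ae_restrict_mem measurableSet_Ioc] with u hu
      have hu0 : 0 < u := lt_of_le_of_lt hx hu.1
      rw [Real.norm_eq_abs, abs_of_nonneg (hnn u hu0)]
      exact hle1 u
  -- integrability of u ↦ h (1 - u) on Ioo 0 1, and h on Ioo 0 1
  have hmeas2 : Measurable (fun u => h (1 - u)) :=
    hmeas.comp (measurable_const.sub measurable_id)
  have hInt2 : IntegrableOn (fun u => h (1 - u)) (Ioo (0:ℝ) 1) volume := by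
    apply Measure.integrableOn_of_bounded measure_Ioo_lt_top.ne hmeas2.aestronglyMeasurable
    · filter_upwards [ae_restrict_mem measurableSet_Ioo] with u hu
      rw [Real.norm_eq_abs, abs_of_nonneg (hnn _ (by linarith [hu.2]))]
      exact hle1 _
  have hInt1 : IntegrableOn h (Ioo (0:ℝ) 1) volume :=
    (hInt 0 1 le_rfl).mono_set Ioo_subset_Ioc_self
  have hGint : IntegrableOn (fun u => C * (h u + h (1 - u))) (Ioo (0:ℝ) 1) volume :=
    ((hInt1.add hInt2).const_mul C)
  -- Step B : pointwise bound
  have hpt : ∀ u ∈ Ioo (0:ℝ) 1,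
      ‖φ (u * t)‖ * ‖φ ((1 - u) * t)‖ ≤ C * (h u + h (1 - u)) := by
    intro u hu
    have hu0 : 0 < u := hu.1
    have hu1 : 0 < 1 - u := by linarith [hu.2]
    rcases le_or_gt u (1/2) with hu2 | hu2
    · have hb : ‖φ ((1-u) * t)‖ ≤ C := hφC _ (by linarith)
      have := mul_le_mul (hφh u hu0) hb (norm_nonneg _) (hnn u hu0)
      have hnn2 := hnn _ hu1
      nlinarith
    · have hb : ‖φ (u * t)‖ ≤ C := hφC _ (by linarith)
      have := mul_le_mul hb (hφh _ hu1) (norm_nonneg _) hC.le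
      have hnn1 := hnn u hu0
      nlinarith
  have hB : ‖φ t‖ ≤ ∫ u in Ioo (0:ℝ) 1, C * (h u + h (1 - u)) :=
    h1.trans (setIntegral_mono_on hI hGint measurableSet_Ioo hpt)
  -- Step C : the integral equals 2 * C * ∫ h
  have hsub : ∫ u in Ioo (0:ℝ) 1, h (1 - u) = ∫ u in Ioo (0:ℝ) 1, h u := by
    rw [← MeasureTheory.integral_Ioc_eq_integral_Ioo, ← MeasureTheory.integral_Ioc_eq_integral_Ioo,
      ← intervalIntegral.integral_of_le (by norm_num : (0:ℝ) ≤ 1),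
      ← intervalIntegral.integral_of_le (by norm_num : (0:ℝ) ≤ 1)]
    simpa using intervalIntegral.integral_comp_sub_left h 1
  have hC2 : ∫ u in Ioo (0:ℝ) 1, C * (h u + h (1 - u))
      = 2 * C * ∫ u in Ioo (0:ℝ) 1, h u := by
    rw [MeasureTheory.integral_const_mul, MeasureTheory.integral_add hInt1 hInt2, hsub]
    ring
  -- Step D : ∫ h ≤ a * (p / (p-1))
  have hD : ∫ u in Ioo (0:ℝ) 1, h u ≤ a * (p / (p - 1)) := by
    have hpp1 : 1 ≤ p / (p - 1) := by
      rw [le_div_iff₀ hp1]; linarith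
    rcases le_or_gt 1 a with h1a | h1a
    · -- a ≥ 1 : ∫ h ≤ 1 ≤ a ≤ a * (p/(p-1))
      have : ∫ u in Ioo (0:ℝ) 1, h u ≤ ∫ _u in Ioo (0:ℝ) 1, (1:ℝ) := by
        apply setIntegral_mono_on hInt1 ((integrableOn_const_iff).mpr (Or.inr measure_Ioo_lt_top))
          measurableSet_Ioo
        intro u hu; exact hle1 u
      rw [MeasureTheory.setIntegral_const] at this
      simp [Real.volume_Ioo] at this
      nlinarith
    · -- a < 1 : split at a
      have hII : ∫ u in Ioo (0:ℝ) 1, h u = ∫ u in (0:ℝ)..1, h u := by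
        rw [intervalIntegral.integral_of_le (by norm_num : (0:ℝ) ≤ 1),
          MeasureTheory.integral_Ioc_eq_integral_Ioo]
      have hi1 : IntervalIntegrable h volume 0 a :=
        (intervalIntegrable_iff_integrableOn_Ioc_of_le ha.le).mpr (hInt 0 a le_rfl)
      have hi2 : IntervalIntegrable h volume a 1 :=
        (intervalIntegrable_iff_integrableOn_Ioc_of_le h1a.le).mpr (hInt a 1 ha.le)
      have hsplit : ∫ u in (0:ℝ)..1, h u = (∫ u in (0:ℝ)..a, h u) + ∫ u in a..1, h u :=
        (intervalIntegral.integral_add_adjacent_intervals hi1 hi2).symm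
      -- first piece ≤ a
      have hA1 : ∫ u in (0:ℝ)..a, h u ≤ a := by
        have : ∫ u in (0:ℝ)..a, h u ≤ ∫ _u in (0:ℝ)..a, (1:ℝ) := by
          apply intervalIntegral.integral_mono_on ha.le hi1 intervalIntegrable_const
          intro u _; exact hle1 u
        simpa using this
      -- second piece
      have h0not : (0:ℝ) ∉ uIcc a 1 := by
        rw [Set.uIcc_of_le h1a.le]
        intro hmem
        exact absurd hmem.1 (not_le.mpr ha)
      have hir : IntervalIntegrable (fun u : ℝ => c * t ^ (-p) * u ^ (-p)) volume a 1 :=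
        (intervalIntegral.intervalIntegrable_rpow (Or.inr h0not)).const_mul _
      have hA2 : ∫ u in a..1, h u ≤ ∫ u in a..1, c * t ^ (-p) * u ^ (-p) := by
        apply intervalIntegral.integral_mono_on h1a.le hi2 hir
        intro u hu
        have hu0 : 0 < u := lt_of_lt_of_le ha hu.1
        calc h u ≤ c * (u * t) ^ (-p) := min_le_right _ _
          _ = c * t ^ (-p) * u ^ (-p) := by
              rw [Real.mul_rpow hu0.le ht.le]; ring
      have hval : ∫ u in a..1, c * t ^ (-p) * u ^ (-p)
          = c * t ^ (-p) * (((1:ℝ) ^ (-p + 1) - a ^ (-p + 1)) / (-p + 1)) := by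
        rw [intervalIntegral.integral_const_mul, integral_rpow (Or.inr ⟨by linarith, h0not⟩)]
      have hone : (1:ℝ) ^ (-p + 1) = 1 := Real.one_rpow _
      have hkey : c * t ^ (-p) * a ^ (-p + 1) = a := by
        have e1 : a ^ (-p + 1) = c ^ (1/p * (-p + 1)) / t ^ (-p + 1) := by
          rw [ha_def, div_rpow (rpow_nonneg hc.le _) ht.le, ← Real.rpow_mul hc.le]
        have e2 : (1:ℝ)/p * (-p + 1) = 1/p - 1 := by
          field_simp
          ring
        have e3 : c ^ (1/p - 1) = c ^ (1/p) / c := by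
          rw [Real.rpow_sub hc, Real.rpow_one]
        have e4 : t ^ (-p + 1) = t ^ (-p) * t := by
          rw [Real.rpow_add ht, Real.rpow_one]
        rw [e1, e2, e3, e4, ha_def]
        have htp : (0:ℝ) < t ^ (-p) := rpow_pos_of_pos ht _
        field_simp
      have hA2' : ∫ u in a..1, h u ≤ a / (p - 1) := by
        refine hA2.trans ?_
        rw [hval, hone]
        have hnp : -p + 1 = -(p - 1) := by ring
        have : c * t ^ (-p) * ((1 - a ^ (-p + 1)) / (-p + 1))
            = (c * t ^ (-p) * a ^ (-p + 1) - c * t ^ (-p)) / (p - 1) := by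
          have hgen : ∀ A X : ℝ, A * ((1 - X) / (-p + 1)) = (A * X - A) / (p - 1) := by
            intro A X
            have hne : p - 1 ≠ 0 := hp1.ne'
            have hne3 : (1:ℝ) - p ≠ 0 := by intro hh; apply hne; linarith
            have hne4 : -p + (1:ℝ) ≠ 0 := by intro hh; apply hne; linarith
            field_simp
            ring
          exact hgen _ _
        rw [this, hkey]
        have hpos : 0 < c * t ^ (-p) := by positivity
        gcongr
        linarith
      have hfin : a + a / (p - 1) = a * (p / (p - 1)) := by
        field_simp
        ring
      rw [hII, hsplit, ← hfin]
      linarith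
  -- final assembly
  have hfinal : ‖φ t‖ ≤ 2 * C * (a * (p / (p - 1))) := by
    rw [hC2] at hB
    have hint_nn : (0:ℝ) ≤ 2 * C := by positivity
    refine hB.trans ?_
    exact mul_le_mul_of_nonneg_left hD hint_nn
  refine hfinal.trans_eq ?_
  rw [hC_def, ha_def]
  rw [Real.rpow_add (by norm_num : (0:ℝ) < 2), Real.rpow_add hc,
    show -(p+1) = -p + -1 by ring, Real.rpow_add ht, Real.rpow_one,
    Real.rpow_neg_one]
  have : c ^ (1/p) / t = c ^ (1/p) * t⁻¹ := div_eq_mul_inv _ _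
  rw [this]
  simp only [Real.rpow_one]
  ring
end

section
/- Let φ be the characteristic function of the limiting Quicksort distribution (satisfying the fixed point equation Y =_d UY + (1-U)Z + g(U) as above). Then the constants c_p := sup_{t>0} t^p |φ(t)| satisfy c_p ≤ 2^{p² + 6p} for all p > 0. -/
open Set Real MeasureTheory ProbabilityTheory intervalIntegral

lemma norm_exp_I_mul_real (r : ℝ) : ‖Complex.exp (Complex.I * r)‖ = 1 := by
  rw [Complex.norm_exp]
  simp

lemma vdc_piece (ψ dψ ddψ : ℝ → ℝ) (w v : ℝ) (hwv : w ≤ v)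
    (hd : ∀ u ∈ Set.Icc w v, HasDerivAt ψ (dψ u) u)
    (hdd : ∀ u ∈ Set.Icc w v, HasDerivAt dψ (ddψ u) u)
    (hpos : ∀ u ∈ Set.Icc w v, 0 < dψ u)
    (hddnn : ∀ u ∈ Set.Icc w v, 0 ≤ ddψ u)
    (hcont : ContinuousOn ddψ (Set.Icc w v)) :
    ‖∫ u in w..v, Complex.exp (Complex.I * ψ u)‖ ≤ 2 / dψ w := by
  have huIcc : Set.uIcc w v = Set.Icc w v := Set.uIcc_of_le hwv
  have hdc : ContinuousOn dψ (Set.Icc w v) := fun u hu => ((hdd u hu).continuousAt).continuousWithinAt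
  have hψc : ContinuousOn ψ (Set.Icc w v) := fun u hu => ((hd u hu).continuousAt).continuousWithinAt
  set E : ℝ → ℂ := fun u => Complex.exp (Complex.I * ψ u) with hE
  have hEc : ContinuousOn E (Set.Icc w v) := by
    apply Complex.continuous_exp.comp_continuousOn
    exact (continuousOn_const.mul (Complex.continuous_ofReal.comp_continuousOn hψc))
  set G : ℝ → ℂ := fun u => E u / (Complex.I * dψ u) with hG
  have hne : ∀ u ∈ Set.Icc w v, (Complex.I * dψ u) ≠ 0 := by
    intro u hu
    simp only [ne_eq, mul_eq_zero, Complex.I_ne_zero, false_or, Complex.ofReal_eq_zero]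
    exact ne_of_gt (hpos u hu)
  have hGd : ∀ u ∈ Set.Icc w v,
      HasDerivAt G (E u + E u * Complex.I * ddψ u / (dψ u : ℂ)^2) u := by
    intro u hu
    have h1 : HasDerivAt (fun x : ℝ => Complex.I * (ψ x : ℂ)) (Complex.I * dψ u) u := by
      exact (HasDerivAt.ofReal_comp (hd u hu)).const_mul Complex.I
    have hEd : HasDerivAt E (E u * (Complex.I * dψ u)) u := by
      simpa using h1.cexp
    have h2 : HasDerivAt (fun x : ℝ => Complex.I * (dψ x : ℂ)) (Complex.I * ddψ u) u := by
      exact (HasDerivAt.ofReal_comp (hdd u hu)).const_mul Complex.I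
    have := hEd.div h2 (hne u hu)
    refine this.congr_deriv ?_
    symm
    have hdne : (dψ u : ℂ) ≠ 0 := Complex.ofReal_ne_zero.mpr (ne_of_gt (hpos u hu))
    field_simp
    ring_nf
    rw [Complex.I_sq]
    ring
  have hnum : ContinuousOn (fun u => E u * Complex.I * (ddψ u : ℂ) / (dψ u : ℂ)^2) (Set.Icc w v) := by
    apply ContinuousOn.div
    · exact (hEc.mul continuousOn_const).mul (Complex.continuous_ofReal.comp_continuousOn hcont)
    · exact (Complex.continuous_ofReal.comp_continuousOn hdc).pow 2
    · intro u hu; exact pow_ne_zero _ (Complex.ofReal_ne_zero.mpr (ne_of_gt (hpos u hu)))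
  have hEint : IntervalIntegrable E volume w v := by
    apply ContinuousOn.intervalIntegrable; rw [huIcc]; exact hEc
  have hnint : IntervalIntegrable (fun u => E u * Complex.I * (ddψ u:ℂ) / (dψ u:ℂ)^2) volume w v := by
    apply ContinuousOn.intervalIntegrable; rw [huIcc]; exact hnum
  have hFTC : ∫ u in w..v, (E u + E u * Complex.I * (ddψ u:ℂ) / (dψ u:ℂ)^2) = G v - G w := by
    apply integral_eq_sub_of_hasDerivAt (fun u hu => hGd u (huIcc ▸ hu))
    exact hEint.add hnint
  have hsplit : ∫ u in w..v, E u
      = G v - G w - ∫ u in w..v, E u * Complex.I * (ddψ u:ℂ)/(dψ u:ℂ)^2 := by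
    rw [← hFTC, integral_add hEint hnint]; ring
  have hH : ∀ u ∈ Set.Icc w v, HasDerivAt (fun x => -(dψ x)⁻¹) (ddψ u / (dψ u)^2) u := by
    intro u hu
    have := ((hdd u hu).inv (ne_of_gt (hpos u hu))).neg
    refine this.congr_deriv ?_
    symm
    field_simp
  have hquotc : ContinuousOn (fun u => ddψ u / (dψ u)^2) (Set.Icc w v) :=
    hcont.div (hdc.pow 2) (fun u hu => pow_ne_zero _ (ne_of_gt (hpos u hu)))
  have hFTC2 : ∫ u in w..v, ddψ u / (dψ u)^2 = (dψ w)⁻¹ - (dψ v)⁻¹ := by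
    rw [integral_eq_sub_of_hasDerivAt (fun u hu => hH u (huIcc ▸ hu))
      (by apply ContinuousOn.intervalIntegrable; rw [huIcc]; exact hquotc)]
    ring
  have hnorm2 : ‖∫ u in w..v, E u * Complex.I * (ddψ u:ℂ)/(dψ u:ℂ)^2‖ ≤ (dψ w)⁻¹ - (dψ v)⁻¹ := by
    rw [← hFTC2]
    calc ‖∫ u in w..v, E u * Complex.I * (ddψ u:ℂ)/(dψ u:ℂ)^2‖
        ≤ ∫ u in w..v, ‖E u * Complex.I * (ddψ u:ℂ)/(dψ u:ℂ)^2‖ :=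
          intervalIntegral.norm_integral_le_integral_norm hwv
      _ = ∫ u in w..v, ddψ u / (dψ u)^2 := by
          apply integral_congr
          intro u hu
          rw [huIcc] at hu
          simp only []
          rw [norm_div, norm_mul, norm_mul, norm_exp_I_mul_real, Complex.norm_I]
          simp only [Complex.norm_real, norm_pow]
          rw [Real.norm_eq_abs, Real.norm_eq_abs, abs_of_nonneg (hddnn u hu), sq_abs]
          ring
  have hGnorm : ∀ u ∈ Set.Icc w v, ‖G u‖ = (dψ u)⁻¹ := by
    intro u hu
    show ‖E u / (Complex.I * (dψ u:ℂ))‖ = (dψ u)⁻¹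
    rw [norm_div, norm_exp_I_mul_real, norm_mul, Complex.norm_I, Complex.norm_real,
      Real.norm_eq_abs, abs_of_pos (hpos u hu)]
    simp
  have hvmem : v ∈ Set.Icc w v := ⟨hwv, le_refl v⟩
  have hwmem : w ∈ Set.Icc w v := ⟨le_refl w, hwv⟩
  calc ‖∫ u in w..v, E u‖
      ≤ ‖G v‖ + ‖G w‖ + ‖∫ u in w..v, E u * Complex.I * (ddψ u:ℂ)/(dψ u:ℂ)^2‖ := by
        rw [hsplit]
        refine le_trans (norm_sub_le _ _) ?_
        gcongr
        exact norm_sub_le _ _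
    _ ≤ (dψ v)⁻¹ + (dψ w)⁻¹ + ((dψ w)⁻¹ - (dψ v)⁻¹) := by
        rw [hGnorm v hvmem, hGnorm w hwmem]
        linarith [hnorm2]
    _ = 2 / dψ w := by ring

lemma vdc_piece_neg (ψ dψ ddψ : ℝ → ℝ) (w v : ℝ) (hwv : w ≤ v)
    (hd : ∀ u ∈ Set.Icc w v, HasDerivAt ψ (dψ u) u)
    (hdd : ∀ u ∈ Set.Icc w v, HasDerivAt dψ (ddψ u) u)
    (hneg : ∀ u ∈ Set.Icc w v, dψ u < 0)
    (hddnn : ∀ u ∈ Set.Icc w v, 0 ≤ ddψ u)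
    (hcont : ContinuousOn ddψ (Set.Icc w v)) :
    ‖∫ u in w..v, Complex.exp (Complex.I * ψ u)‖ ≤ 2 / (-dψ v) := by
  have hmem : ∀ u ∈ Set.Icc w v, w + v - u ∈ Set.Icc w v := by
    intro u hu; exact ⟨by linarith [hu.2], by linarith [hu.1]⟩
  have hrefl : ∀ u : ℝ, HasDerivAt (fun x : ℝ => w + v - x) (-1) u := by
    intro u
    simpa using (hasDerivAt_id u).const_sub (w + v)
  have h1 : ‖∫ u in w..v, Complex.exp (Complex.I * (ψ (w + v - u) : ℝ))‖
      ≤ 2 / (-(dψ (w + v - w))) := by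
    apply vdc_piece (fun u => ψ (w + v - u)) (fun u => -(dψ (w + v - u)))
      (fun u => ddψ (w + v - u)) w v hwv
    · intro u hu
      have := (hd _ (hmem u hu)).comp u (hrefl u)
      simpa [mul_comm, Function.comp_def] using this
    · intro u hu
      have := (hdd _ (hmem u hu)).comp u (hrefl u)
      have h2 := this.neg
      simpa [mul_comm, Function.comp_def, Pi.neg_def] using h2
    · intro u hu; linarith [hneg _ (hmem u hu)]
    · intro u hu; exact hddnn _ (hmem u hu)
    · exact (hcont.comp (Continuous.continuousOn (by continuity)) (fun u hu => hmem u hu))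
  have h2 : ∫ u in w..v, Complex.exp (Complex.I * (ψ (w + v - u) : ℝ))
      = ∫ u in w..v, Complex.exp (Complex.I * (ψ u : ℝ)) := by
    have := intervalIntegral.integral_comp_sub_left
      (fun x => Complex.exp (Complex.I * (ψ x : ℝ))) (w + v) (a := w) (b := v)
    simpa using this
  rw [h2] at h1
  simpa using h1

lemma arith_quarter (s : ℝ) (hs : 0 < s) : 2/(4*s) + 1/s + 2/(4*s) = 2/s := by
  field_simp
  ring

set_option maxHeartbeats 1000000 in
lemma vdc_main (t y z : ℝ) (ht : 0 < t) :
    ‖∫ u in Set.Ioo (0:ℝ) 1, Complex.exp (Complex.I *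
      ((t * (u * y + (1 - u) * z + (2 * u * Real.log u + 2 * (1 - u) * Real.log (1 - u) + 1)) : ℝ) : ℂ))‖
      ≤ 2 / Real.sqrt t := by
  set ψ : ℝ → ℝ := fun u =>
    t * (u * y + (1 - u) * z + (2 * u * Real.log u + 2 * (1 - u) * Real.log (1 - u) + 1)) with hψ
  set dψ : ℝ → ℝ := fun u => t * ((y - z) + (2 * Real.log u - 2 * Real.log (1 - u))) with hdψ
  set ddψ : ℝ → ℝ := fun u => t * (2 / u + 2 / (1 - u)) with hddψ
  set F : ℝ → ℂ := fun u => Complex.exp (Complex.I * (ψ u : ℝ)) with hF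
  have hst : 0 < Real.sqrt t := Real.sqrt_pos.mpr ht
  set δ : ℝ := 4 * Real.sqrt t with hδ
  have hδpos : 0 < δ := by positivity
  -- derivatives
  have hd : ∀ u ∈ Set.Ioo (0:ℝ) 1, HasDerivAt ψ (dψ u) u := by
    intro u hu
    have hu0 : u ≠ 0 := ne_of_gt hu.1
    have hu1 : (1:ℝ) - u ≠ 0 := by have := hu.2; intro h; linarith [h]
    have l1 : HasDerivAt (fun x : ℝ => x * Real.log x) (Real.log u + 1) u :=
      Real.hasDerivAt_mul_log hu0
    have l2 : HasDerivAt (fun x : ℝ => (1 - x) * Real.log (1 - x))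
        (-(Real.log (1 - u) + 1)) u := by
      have inner : HasDerivAt (fun x : ℝ => 1 - x) (-1) u := by
        simpa using (hasDerivAt_id u).const_sub 1
      have := (Real.hasDerivAt_mul_log hu1).comp u inner
      simpa [mul_comm, Function.comp_def] using this
    have sum : HasDerivAt (fun x : ℝ =>
        x * y + (1 - x) * z + (2 * x * Real.log x + 2 * (1 - x) * Real.log (1 - x) + 1))
        (y - z + (2 * Real.log u - 2 * Real.log (1 - u))) u := by
      have hy : HasDerivAt (fun x : ℝ => x * y) y u := by
        simpa using (hasDerivAt_id u).mul_const y
      have hz : HasDerivAt (fun x : ℝ => (1 - x) * z) (-z) u := by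
        have inner : HasDerivAt (fun x : ℝ => 1 - x) (-1) u := by
          simpa using (hasDerivAt_id u).const_sub 1
        simpa using inner.mul_const z
      have h2l1 : HasDerivAt (fun x : ℝ => 2 * (x * Real.log x)) (2 * (Real.log u + 1)) u :=
        l1.const_mul 2
      have h2l2 : HasDerivAt (fun x : ℝ => 2 * ((1 - x) * Real.log (1 - x)))
          (2 * (-(Real.log (1 - u) + 1))) u := l2.const_mul 2
      have := ((hy.add hz).add (((h2l1.add h2l2)).add_const 1))
      refine (this.congr_deriv ?_).congr_of_eventuallyEq ?_
      · ring
      · exact Filter.Eventually.of_forall (fun x => by simp only [Pi.add_apply]; ring)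
    exact sum.const_mul t
  have hdd : ∀ u ∈ Set.Ioo (0:ℝ) 1, HasDerivAt dψ (ddψ u) u := by
    intro u hu
    have hu0 : u ≠ 0 := ne_of_gt hu.1
    have hu1 : (1:ℝ) - u ≠ 0 := by have := hu.2; intro h; linarith [h]
    have l1 : HasDerivAt Real.log u⁻¹ u := Real.hasDerivAt_log hu0
    have l2 : HasDerivAt (fun x : ℝ => Real.log (1 - x)) (-(1 - u)⁻¹) u := by
      have inner : HasDerivAt (fun x : ℝ => 1 - x) (-1) u := by
        simpa using (hasDerivAt_id u).const_sub 1
      have := (Real.hasDerivAt_log hu1).comp u inner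
      simpa [mul_comm, Function.comp_def] using this
    have sum : HasDerivAt (fun x : ℝ => (y - z) + (2 * Real.log x - 2 * Real.log (1 - x)))
        (2 * u⁻¹ - 2 * (-(1 - u)⁻¹)) u := by
      exact (((l1.const_mul 2).sub (l2.const_mul 2))).const_add (y - z)
    have := sum.const_mul t
    refine this.congr_deriv ?_
    symm
    show t * (2 / u + 2 / (1 - u)) = t * (2 * u⁻¹ - 2 * -(1 - u)⁻¹)
    rw [div_eq_mul_inv, div_eq_mul_inv]
    ring
  -- monotonicity of dψ with gap 8t
  have key : ∀ u u' : ℝ, u ∈ Set.Ioo (0:ℝ) 1 → u' ∈ Set.Ioo (0:ℝ) 1 → u ≤ u' →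
      dψ u + 8 * t * (u' - u) ≤ dψ u' := by
    intro u u' hu hu' huu
    have hsub : Set.Icc u u' ⊆ Set.Ioo (0:ℝ) 1 := fun x hx => ⟨lt_of_lt_of_le hu.1 hx.1,
      lt_of_le_of_lt hx.2 hu'.2⟩
    have hcont : ContinuousOn ddψ (Set.Icc u u') := by
      apply ContinuousOn.mul continuousOn_const
      apply ContinuousOn.add
      · exact ContinuousOn.div continuousOn_const continuousOn_id
          (fun x hx => ne_of_gt (hsub hx).1)
      · exact ContinuousOn.div continuousOn_const (continuousOn_const.sub continuousOn_id)
          (fun x hx => ne_of_gt (by linarith [(hsub hx).2] : (0:ℝ) < 1 - x))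
    have hFTC : ∫ x in u..u', ddψ x = dψ u' - dψ u := by
      apply integral_eq_sub_of_hasDerivAt
      · intro x hx
        rw [Set.uIcc_of_le huu] at hx
        exact hdd x (hsub hx)
      · apply ContinuousOn.intervalIntegrable
        rw [Set.uIcc_of_le huu]; exact hcont
    have hlow : 8 * t * (u' - u) ≤ ∫ x in u..u', ddψ x := by
      have h8 : ∀ x ∈ Set.Icc u u', 8 * t ≤ ddψ x := by
        intro x hx
        have hx' := hsub hx
        have hx0 : 0 < x := hx'.1
        have hx1 : 0 < 1 - x := by linarith [hx'.2]
        have base : (8:ℝ) ≤ 2 / x + 2 / (1 - x) := by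
          rw [div_add_div _ _ (ne_of_gt hx0) (ne_of_gt hx1), le_div_iff₀ (by positivity)]
          nlinarith [sq_nonneg (2*x - 1)]
        have h' := mul_le_mul_of_nonneg_left base (le_of_lt ht)
        have hdd' : ddψ x = t * (2 / x + 2 / (1 - x)) := rfl
        linarith [h']
      calc 8 * t * (u' - u) = ∫ _x in u..u', 8 * t := by
            simp [intervalIntegral.integral_const]; ring
        _ ≤ ∫ x in u..u', ddψ x := by
            apply intervalIntegral.integral_mono_on huu (by simp) ?_ h8
            apply ContinuousOn.intervalIntegrable
            rw [Set.uIcc_of_le huu]; exact hcont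
    linarith [hFTC ▸ hlow]
  -- logistic split points
  set L : ℝ → ℝ := fun x => 1 / (1 + Real.exp (-x)) with hL
  have hLpos : ∀ x, 0 < L x := by
    intro x
    have : (0:ℝ) < 1 + Real.exp (-x) := by positivity
    positivity
  have hLlt : ∀ x, L x < 1 := by
    intro x
    have he : 0 < Real.exp (-x) := Real.exp_pos _
    rw [hL]
    simp only
    rw [div_lt_one (by positivity)]
    linarith
  have hLlog : ∀ x, 2 * Real.log (L x) - 2 * Real.log (1 - L x) = 2 * x := by
    intro x
    have he : 0 < Real.exp (-x) := Real.exp_pos _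
    have hde : (0:ℝ) < 1 + Real.exp (-x) := by linarith
    have h1m : 1 - L x = Real.exp (-x) / (1 + Real.exp (-x)) := by
      rw [hL]
      field_simp
      ring
    rw [h1m, hL]
    simp only
    rw [Real.log_div (ne_of_gt he) (ne_of_gt hde), Real.log_div one_ne_zero (ne_of_gt hde),
      Real.log_one, Real.log_exp]
    ring
  have hLmono : ∀ x x' : ℝ, x ≤ x' → L x ≤ L x' := by
    intro x x' h
    rw [hL]
    simp only
    apply one_div_le_one_div_of_le (by positivity)
    have : Real.exp (-x') ≤ Real.exp (-x) := Real.exp_le_exp.mpr (by linarith)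
    linarith
  set a : ℝ := L ((-δ/t - (y - z))/2) with ha
  set b : ℝ := L ((δ/t - (y - z))/2) with hb
  have ha01 : a ∈ Set.Ioo (0:ℝ) 1 := ⟨hLpos _, hLlt _⟩
  have hb01 : b ∈ Set.Ioo (0:ℝ) 1 := ⟨hLpos _, hLlt _⟩
  have htne : t ≠ 0 := ne_of_gt ht
  have hdψa : dψ a = -δ := by
    have hl := hLlog ((-δ/t - (y - z))/2)
    show t * (y - z + (2 * Real.log a - 2 * Real.log (1 - a))) = -δ
    rw [hl]
    field_simp
    ring
  have hdψb : dψ b = δ := by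
    have hl := hLlog ((δ/t - (y - z))/2)
    show t * (y - z + (2 * Real.log b - 2 * Real.log (1 - b))) = δ
    rw [hl]
    field_simp
    ring
  have hab : a ≤ b := by
    apply hLmono
    have h1 : 0 < δ/t := div_pos hδpos ht
    have h2 : -δ/t = -(δ/t) := neg_div _ _
    linarith
  have hs2 : Real.sqrt t * Real.sqrt t = t := Real.mul_self_sqrt (le_of_lt ht)
  have hba : b - a ≤ 1 / Real.sqrt t := by
    have h8 := key a b ha01 hb01 hab
    rw [hdψa, hdψb] at h8
    rw [le_div_iff₀ hst]
    nlinarith [hs2, hst]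
  have hlowsign : ∀ u, u ∈ Set.Ioo (0:ℝ) 1 → u ≤ a → dψ u ≤ -δ := by
    intro u hu hua
    have := key u a hu ha01 hua
    rw [hdψa] at this
    nlinarith [ht]
  have hhighsign : ∀ u, u ∈ Set.Ioo (0:ℝ) 1 → b ≤ u → δ ≤ dψ u := by
    intro u hu hbu
    have := key b u hb01 hu hbu
    rw [hdψb] at this
    nlinarith [ht]
  have hddcont : ContinuousOn ddψ (Set.Ioo (0:ℝ) 1) := by
    apply ContinuousOn.mul continuousOn_const
    apply ContinuousOn.add
    · exact ContinuousOn.div continuousOn_const continuousOn_id (fun x hx => ne_of_gt hx.1)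
    · exact ContinuousOn.div continuousOn_const (continuousOn_const.sub continuousOn_id)
        (fun x hx => ne_of_gt (by linarith [hx.2] : (0:ℝ) < 1 - x))
  have hFmeas : Measurable F := by
    apply Complex.measurable_exp.comp
    apply (measurable_const.mul ?_)
    apply Complex.measurable_ofReal.comp
    apply Measurable.const_mul
    apply Measurable.add
    · exact (measurable_id.mul measurable_const).add ((measurable_const.sub measurable_id).mul measurable_const)
    · apply Measurable.add ?_ measurable_const
      apply Measurable.add
      · exact (measurable_const.mul measurable_id).mul (Real.measurable_log.comp measurable_id)
      · exact (measurable_const.mul (measurable_const.sub measurable_id)).mul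
          (Real.measurable_log.comp (measurable_const.sub measurable_id))
  have hFnorm : ∀ u, ‖F u‖ = 1 := fun u => norm_exp_I_mul_real (ψ u)
  have hFint : ∀ p q : ℝ, IntervalIntegrable F volume p q := by
    intro p q
    rw [intervalIntegrable_iff]
    haveI : Fact (volume (Set.uIoc p q) < ⊤) := ⟨by rw [Set.uIoc]; exact measure_Ioc_lt_top⟩
    apply MeasureTheory.Integrable.mono' (integrable_const 1) hFmeas.aestronglyMeasurable
    filter_upwards with u
    rw [hFnorm u]
  -- middle piece
  have hmid : ‖∫ u in a..b, F u‖ ≤ 1 / Real.sqrt t := by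
    have := intervalIntegral.norm_integral_le_of_norm_le_const (C := 1)
      (a := a) (b := b) (f := F) (fun x _ => le_of_eq (hFnorm x))
    rw [abs_of_nonneg (by linarith : (0:ℝ) ≤ b - a)] at this
    linarith
  -- high piece
  have hhigh : ‖∫ u in b..1, F u‖ ≤ 2/δ := by
    apply le_of_forall_pos_le_add
    intro ε hε
    set ε' : ℝ := min ε (1 - b) with hε'
    have hε'pos : 0 < ε' := lt_min hε (by linarith [hb01.2])
    have hε'le : ε' ≤ 1 - b := min_le_right _ _
    set v : ℝ := 1 - ε' with hv
    have hbv : b ≤ v := by rw [hv]; linarith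
    have hv1 : v < 1 := by rw [hv]; linarith
    have hv0 : 0 < v := lt_of_lt_of_le hb01.1 hbv
    have hsub : Set.Icc b v ⊆ Set.Ioo (0:ℝ) 1 := fun x hx =>
      ⟨lt_of_lt_of_le hb01.1 hx.1, lt_of_le_of_lt hx.2 hv1⟩
    have hpiece : ‖∫ u in b..v, F u‖ ≤ 2 / dψ b := by
      apply vdc_piece ψ dψ ddψ b v hbv
      · exact fun u hu => hd u (hsub hu)
      · exact fun u hu => hdd u (hsub hu)
      · intro u hu
        have := hhighsign u (hsub hu) hu.1
        linarith
      · intro u hu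
        have hx := hsub hu
        have h1 : 0 < 2 / u + 2 / (1 - u) := by
          apply add_pos <;> [skip; skip] <;> apply div_pos two_pos
          · exact hx.1
          · linarith [hx.2]
        have : ddψ u = t * (2 / u + 2 / (1 - u)) := rfl
        nlinarith
      · exact hddcont.mono hsub
    have htail : ‖∫ u in v..1, F u‖ ≤ ε' := by
      have := intervalIntegral.norm_integral_le_of_norm_le_const (C := 1)
        (a := v) (b := 1) (f := F) (fun x _ => le_of_eq (hFnorm x))
      rw [abs_of_nonneg (by linarith : (0:ℝ) ≤ 1 - v)] at this
      rw [hv] at this ⊢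
      linarith
    have hsplit : ∫ u in b..1, F u = (∫ u in b..v, F u) + ∫ u in v..1, F u :=
      (intervalIntegral.integral_add_adjacent_intervals (hFint b v) (hFint v 1)).symm
    rw [hsplit]
    calc ‖(∫ u in b..v, F u) + ∫ u in v..1, F u‖
        ≤ ‖∫ u in b..v, F u‖ + ‖∫ u in v..1, F u‖ := norm_add_le _ _
      _ ≤ 2 / dψ b + ε' := add_le_add hpiece htail
      _ ≤ 2 / δ + ε := by rw [hdψb]; exact add_le_add le_rfl (min_le_left _ _)
  -- low piece
  have hlow : ‖∫ u in (0:ℝ)..a, F u‖ ≤ 2/δ := by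
    apply le_of_forall_pos_le_add
    intro ε hε
    set w : ℝ := min ε a with hw
    have hwpos : 0 < w := lt_min hε ha01.1
    have hwa : w ≤ a := min_le_right _ _
    have hsub : Set.Icc w a ⊆ Set.Ioo (0:ℝ) 1 := fun x hx =>
      ⟨lt_of_lt_of_le hwpos hx.1, lt_of_le_of_lt hx.2 ha01.2⟩
    have hpiece : ‖∫ u in w..a, F u‖ ≤ 2 / (-dψ a) := by
      apply vdc_piece_neg ψ dψ ddψ w a hwa
      · exact fun u hu => hd u (hsub hu)
      · exact fun u hu => hdd u (hsub hu)
      · intro u hu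
        have := hlowsign u (hsub hu) hu.2
        linarith
      · intro u hu
        have hx := hsub hu
        have h1 : 0 < 2 / u + 2 / (1 - u) := by
          apply add_pos <;> [skip; skip] <;> apply div_pos two_pos
          · exact hx.1
          · linarith [hx.2]
        have : ddψ u = t * (2 / u + 2 / (1 - u)) := rfl
        nlinarith
      · exact hddcont.mono hsub
    have htail : ‖∫ u in (0:ℝ)..w, F u‖ ≤ w := by
      have := intervalIntegral.norm_integral_le_of_norm_le_const (C := 1)
        (a := (0:ℝ)) (b := w) (f := F) (fun x _ => le_of_eq (hFnorm x))
      rw [abs_of_nonneg (by linarith : (0:ℝ) ≤ w - 0)] at this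
      linarith
    have hsplit : ∫ u in (0:ℝ)..a, F u = (∫ u in (0:ℝ)..w, F u) + ∫ u in w..a, F u :=
      (intervalIntegral.integral_add_adjacent_intervals (hFint 0 w) (hFint w a)).symm
    rw [hsplit]
    calc ‖(∫ u in (0:ℝ)..w, F u) + ∫ u in w..a, F u‖
        ≤ ‖∫ u in (0:ℝ)..w, F u‖ + ‖∫ u in w..a, F u‖ := norm_add_le _ _
      _ ≤ w + 2 / (-dψ a) := add_le_add htail hpiece
      _ ≤ 2 / δ + ε := by
          rw [hdψa, neg_neg]
          have : w ≤ ε := min_le_left _ _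
          linarith
  -- assemble
  have hIoo : ∫ u in Set.Ioo (0:ℝ) 1, F u = ∫ u in (0:ℝ)..1, F u := by
    rw [intervalIntegral.integral_of_le zero_le_one, integral_Ioc_eq_integral_Ioo]
  have hadd1 : (∫ u in (0:ℝ)..a, F u) + ∫ u in a..b, F u = ∫ u in (0:ℝ)..b, F u :=
    intervalIntegral.integral_add_adjacent_intervals (hFint 0 a) (hFint a b)
  have hadd2 : (∫ u in (0:ℝ)..b, F u) + ∫ u in b..1, F u = ∫ u in (0:ℝ)..1, F u :=
    intervalIntegral.integral_add_adjacent_intervals (hFint 0 b) (hFint b 1)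
  have hfinal : ‖∫ u in (0:ℝ)..1, F u‖ ≤ 2/δ + 1/Real.sqrt t + 2/δ := by
    rw [← hadd2, ← hadd1]
    calc ‖((∫ u in (0:ℝ)..a, F u) + ∫ u in a..b, F u) + ∫ u in b..1, F u‖
        ≤ ‖(∫ u in (0:ℝ)..a, F u) + ∫ u in a..b, F u‖ + ‖∫ u in b..1, F u‖ := norm_add_le _ _
      _ ≤ (‖∫ u in (0:ℝ)..a, F u‖ + ‖∫ u in a..b, F u‖) + ‖∫ u in b..1, F u‖ :=
          add_le_add (norm_add_le _ _) le_rfl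
      _ ≤ (2/δ + 1/Real.sqrt t) + 2/δ :=
          add_le_add (add_le_add hlow hmid) hhigh
  rw [hIoo]
  calc ‖∫ u in (0:ℝ)..1, F u‖ ≤ 2/δ + 1/Real.sqrt t + 2/δ := hfinal
    _ = 2 / Real.sqrt t := by
        rw [hδ]
        exact arith_quarter _ hst

lemma arithW (s q : ℝ) (hs : 0 < s) (hq : 0 ≤ q) :
    4/(s*s) + (2/s)*(2*q - 2*(2/s)) ≤ 2*(2*q)/s := by
  have h : 4/(s*s) + (2/s)*(2*q - 2*(2/s)) = 2*(2*q)/s - 4/(s*s) := by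
    field_simp
    ring
  rw [h]
  have : 0 < 4/(s*s) := by positivity
  linarith

lemma Wbound (φ : ℝ → ℂ) (h1 : ∀ s, ‖φ s‖ ≤ 1) (hc : Continuous φ)
    (h2 : ∀ s : ℝ, 0 < s → ‖φ s‖ ≤ 2 / Real.sqrt s) (t : ℝ) (ht : 0 < t) :
    ∫ u in (0:ℝ)..(1/2), ‖φ (u*t)‖ ≤ 2 * Real.sqrt 2 / Real.sqrt t := by
  have hst : 0 < Real.sqrt t := Real.sqrt_pos.mpr ht
  have hs2 : Real.sqrt t * Real.sqrt t = t := Real.mul_self_sqrt ht.le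
  have hcont : Continuous (fun u : ℝ => ‖φ (u*t)‖) :=
    (hc.comp (continuous_id.mul continuous_const)).norm
  have hint : ∀ a b : ℝ, IntervalIntegrable (fun u => ‖φ (u*t)‖) volume a b :=
    fun a b => hcont.intervalIntegrable a b
  rcases le_or_gt t 8 with hc8 | hc8
  · -- small t : bound by 1/2
    calc ∫ u in (0:ℝ)..(1/2), ‖φ (u*t)‖
        ≤ ∫ _u in (0:ℝ)..(1/2), (1:ℝ) := by
          apply intervalIntegral.integral_mono_on (by norm_num) (hint 0 (1/2))
            (intervalIntegrable_const)
          intro x _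
          exact h1 _
      _ = 1/2 := by simp
      _ ≤ 2 * Real.sqrt 2 / Real.sqrt t := by
          rw [le_div_iff₀ hst]
          have hle : Real.sqrt t ≤ Real.sqrt 32 := Real.sqrt_le_sqrt (by linarith)
          have h32 : Real.sqrt 32 ≤ 4 * Real.sqrt 2 := by
            rw [show (32:ℝ) = (4:ℝ)^2 * 2 by norm_num, Real.sqrt_mul (by positivity) 2,
              Real.sqrt_sq (by norm_num : (0:ℝ) ≤ 4)]
          nlinarith [Real.sqrt_nonneg (2:ℝ), Real.sqrt_nonneg (32:ℝ)]
  · -- large t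
    set c : ℝ := 4 / t with hcdef
    have hcpos : 0 < c := by positivity
    have hchalf : c < 1/2 := by
      rw [hcdef, div_lt_iff₀ ht]
      linarith
    have hsqrtc : Real.sqrt c = 2 / Real.sqrt t := by
      rw [hcdef, Real.sqrt_div (by norm_num : (0:ℝ) ≤ 4) t,
        show (4:ℝ) = 2^2 by norm_num, Real.sqrt_sq (by norm_num : (0:ℝ) ≤ 2)]
    -- split the integral at c
    have hsplit : ∫ u in (0:ℝ)..(1/2), ‖φ (u*t)‖
        = (∫ u in (0:ℝ)..c, ‖φ (u*t)‖) + ∫ u in c..(1/2), ‖φ (u*t)‖ :=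
      (intervalIntegral.integral_add_adjacent_intervals (hint 0 c) (hint c (1/2))).symm
    have hpiece1 : ∫ u in (0:ℝ)..c, ‖φ (u*t)‖ ≤ c := by
      calc ∫ u in (0:ℝ)..c, ‖φ (u*t)‖ ≤ ∫ _u in (0:ℝ)..c, (1:ℝ) := by
            apply intervalIntegral.integral_mono_on hcpos.le (hint 0 c) intervalIntegrable_const
            intro x _
            exact h1 _
        _ = c := by simp
    have hFTCsqrt : ∫ u in c..(1/2), (Real.sqrt u)⁻¹ = 2*Real.sqrt (1/2) - 2*Real.sqrt c := by
      have h := integral_eq_sub_of_hasDerivAt (f := fun x : ℝ => 2*Real.sqrt x)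
        (f' := fun x : ℝ => (Real.sqrt x)⁻¹) (a := c) (b := (1/2:ℝ)) ?_ ?_
      · simpa using h
      · intro x hx
        rw [Set.uIcc_of_le hchalf.le] at hx
        have hx0 : 0 < x := lt_of_lt_of_le hcpos hx.1
        have := (Real.hasDerivAt_sqrt (ne_of_gt hx0)).const_mul 2
        refine this.congr_deriv ?_
        symm
        have hsx : 0 < Real.sqrt x := Real.sqrt_pos.mpr hx0
        show (Real.sqrt x)⁻¹ = 2 * (1 / (2 * Real.sqrt x))
        rw [mul_one_div]
        rw [eq_div_iff (by positivity : (2:ℝ) * Real.sqrt x ≠ 0)]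
        field_simp
      · apply ContinuousOn.intervalIntegrable
        rw [Set.uIcc_of_le hchalf.le]
        apply ContinuousOn.inv₀
        · exact (Real.continuous_sqrt).continuousOn
        · intro x hx
          have hx0 : 0 < x := lt_of_lt_of_le hcpos hx.1
          exact ne_of_gt (Real.sqrt_pos.mpr hx0)
    have hpiece2 : ∫ u in c..(1/2), ‖φ (u*t)‖
        ≤ (2/Real.sqrt t) * (2*Real.sqrt (1/2) - 2*Real.sqrt c) := by
      have hcongr : ∫ u in c..(1/2), (2/Real.sqrt t) * (Real.sqrt u)⁻¹
          = (2/Real.sqrt t) * ∫ u in c..(1/2), (Real.sqrt u)⁻¹ :=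
        intervalIntegral.integral_const_mul _ _
      calc ∫ u in c..(1/2), ‖φ (u*t)‖
          ≤ ∫ u in c..(1/2), (2/Real.sqrt t) * (Real.sqrt u)⁻¹ := by
            apply intervalIntegral.integral_mono_on hchalf.le (hint c (1/2))
            · apply ContinuousOn.intervalIntegrable
              rw [Set.uIcc_of_le hchalf.le]
              apply ContinuousOn.mul continuousOn_const
              apply ContinuousOn.inv₀ (Real.continuous_sqrt).continuousOn
              intro x hx
              exact ne_of_gt (Real.sqrt_pos.mpr (lt_of_lt_of_le hcpos hx.1))
            · intro x hx
              have hx0 : 0 < x := lt_of_lt_of_le hcpos hx.1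
              have hxt : 0 < x * t := mul_pos hx0 ht
              calc ‖φ (x*t)‖ ≤ 2 / Real.sqrt (x*t) := h2 _ hxt
                _ = (2/Real.sqrt t) * (Real.sqrt x)⁻¹ := by
                    rw [Real.sqrt_mul hx0.le t]
                    rw [div_mul_eq_div_div]
                    rw [div_div]
                    rw [mul_comm (Real.sqrt x)]
                    rw [← div_div]
                    rfl
        _ = (2/Real.sqrt t) * ∫ u in c..(1/2), (Real.sqrt u)⁻¹ := hcongr
        _ = (2/Real.sqrt t) * (2*Real.sqrt (1/2) - 2*Real.sqrt c) := by rw [hFTCsqrt]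
    have hs12 : Real.sqrt 2 = 2 * Real.sqrt (1/2) := by
      rw [show (2:ℝ) = 4 * (1/2) by norm_num]
      rw [Real.sqrt_mul (by norm_num : (0:ℝ) ≤ 4) (1/2)]
      rw [show (4:ℝ)*(1/2) = 2 by norm_num]
      rw [show (4:ℝ) = 2^2 by norm_num, Real.sqrt_sq (by norm_num : (0:ℝ) ≤ 2)]
    rw [hsplit]
    calc (∫ u in (0:ℝ)..c, ‖φ (u*t)‖) + ∫ u in c..(1/2), ‖φ (u*t)‖
        ≤ c + (2/Real.sqrt t) * (2*Real.sqrt (1/2) - 2*Real.sqrt c) := add_le_add hpiece1 hpiece2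
      _ ≤ 2 * Real.sqrt 2 / Real.sqrt t := by
          rw [hcdef, hsqrtc, hs12]
          have h := arithW (Real.sqrt t) (Real.sqrt (1/2)) hst (Real.sqrt_nonneg _)
          rw [hs2] at h
          exact h

lemma ladder_step (φ : ℝ → ℂ) (h1 : ∀ s, ‖φ s‖ ≤ 1) (hc : Continuous φ)
    (h2 : ∀ s : ℝ, 0 < s → ‖φ s‖ ≤ 2 / Real.sqrt s)
    (hfact : ∀ t : ℝ, 0 < t → ‖φ t‖ ≤ ∫ u in (0:ℝ)..1, ‖φ (u*t)‖ * ‖φ ((1-u)*t)‖)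
    (p B : ℝ) (hp : 0 ≤ p) (hB : 0 ≤ B)
    (hind : ∀ s : ℝ, 0 < s → ‖φ s‖ ≤ B * s ^ (-p))
    (t : ℝ) (ht : 0 < t) :
    ‖φ t‖ ≤ 2^(p + 5/2 : ℝ) * B * t ^ (-(p + 1/2)) := by
  have hst : 0 < Real.sqrt t := Real.sqrt_pos.mpr ht
  set q : ℝ → ℝ := fun u => ‖φ (u*t)‖ * ‖φ ((1-u)*t)‖ with hq
  have hqc : Continuous q := by
    apply Continuous.mul
    · exact (hc.comp (continuous_id.mul continuous_const)).norm
    · exact (hc.comp ((continuous_const.sub continuous_id).mul continuous_const)).norm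
  have hqint : ∀ a b : ℝ, IntervalIntegrable q volume a b := fun a b => hqc.intervalIntegrable a b
  have hqq : ∀ u : ℝ, q (1-u) = q u := by
    intro u
    simp only [hq]
    rw [show (1:ℝ)-(1-u) = u by ring]
    ring
  have hsym : ∫ u in (1/2:ℝ)..1, q u = ∫ u in (0:ℝ)..(1/2), q u := by
    have h := intervalIntegral.integral_comp_sub_left (a := (0:ℝ)) (b := (1/2:ℝ)) q 1
    rw [show (1:ℝ) - 1/2 = 1/2 by norm_num, show (1:ℝ) - 0 = 1 by norm_num] at h
    rw [← h]
    apply intervalIntegral.integral_congr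
    intro x _
    exact hqq x
  have hsplit : ∫ u in (0:ℝ)..1, q u = 2 * ∫ u in (0:ℝ)..(1/2), q u := by
    rw [← intervalIntegral.integral_add_adjacent_intervals (hqint 0 (1/2)) (hqint (1/2) 1), hsym]
    ring
  set K : ℝ := B * 2^p * t^(-p) with hK
  have h2p : (0:ℝ) < 2^p := Real.rpow_pos_of_pos two_pos p
  have htp : (0:ℝ) < t^(-p) := Real.rpow_pos_of_pos ht _
  have hK0 : 0 ≤ K := by positivity
  have hbd : ∀ u ∈ Set.Icc (0:ℝ) (1/2), q u ≤ K * ‖φ (u*t)‖ := by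
    intro u hu
    have h1u : (0:ℝ) < 1 - u := by linarith [hu.2]
    have hut : 0 < (1-u)*t := mul_pos h1u ht
    have hhalf : t/2 ≤ (1-u)*t := by nlinarith [hu.2]
    have hb1 : ‖φ ((1-u)*t)‖ ≤ B * ((1-u)*t) ^ (-p) := hind _ hut
    have hb2 : ((1-u)*t) ^ (-p) ≤ (t/2) ^ (-p) :=
      Real.rpow_le_rpow_of_nonpos (by positivity) hhalf (by linarith)
    have hb3 : (t/2 : ℝ)^(-p) = 2^p * t^(-p) := by
      rw [show t/2 = t * 2⁻¹ by ring, Real.mul_rpow ht.le (by norm_num : (0:ℝ) ≤ 2⁻¹),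
        Real.inv_rpow (by norm_num : (0:ℝ) ≤ 2), ← Real.rpow_neg (by norm_num : (0:ℝ) ≤ 2),
        neg_neg]
      ring
    have : ‖φ ((1-u)*t)‖ ≤ K := by
      rw [hK]
      calc ‖φ ((1-u)*t)‖ ≤ B * ((1-u)*t) ^ (-p) := hb1
        _ ≤ B * (2^p * t^(-p)) := by
            rw [← hb3]
            exact mul_le_mul_of_nonneg_left hb2 hB
        _ = B * 2^p * t^(-p) := by ring
    calc q u = ‖φ (u*t)‖ * ‖φ ((1-u)*t)‖ := rfl
      _ ≤ ‖φ (u*t)‖ * K := mul_le_mul_of_nonneg_left this (norm_nonneg _)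
      _ = K * ‖φ (u*t)‖ := mul_comm _ _
  have hmono : ∫ u in (0:ℝ)..(1/2), q u ≤ K * (2 * Real.sqrt 2 / Real.sqrt t) := by
    calc ∫ u in (0:ℝ)..(1/2), q u
        ≤ ∫ u in (0:ℝ)..(1/2), K * ‖φ (u*t)‖ := by
          apply intervalIntegral.integral_mono_on (by norm_num) (hqint 0 (1/2))
          · exact (continuous_const.mul (hc.comp (continuous_id.mul continuous_const)).norm).intervalIntegrable _ _
          · exact hbd
      _ = K * ∫ u in (0:ℝ)..(1/2), ‖φ (u*t)‖ := intervalIntegral.integral_const_mul _ _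
      _ ≤ K * (2 * Real.sqrt 2 / Real.sqrt t) :=
          mul_le_mul_of_nonneg_left (Wbound φ h1 hc h2 t ht) hK0
  have hmain : ‖φ t‖ ≤ 2 * (K * (2 * Real.sqrt 2 / Real.sqrt t)) := by
    calc ‖φ t‖ ≤ ∫ u in (0:ℝ)..1, q u := hfact t ht
      _ = 2 * ∫ u in (0:ℝ)..(1/2), q u := hsplit
      _ ≤ 2 * (K * (2 * Real.sqrt 2 / Real.sqrt t)) := by linarith [hmono]
  have hA : (2:ℝ)^(p+5/2:ℝ) = (2:ℝ)^p * (4 * Real.sqrt 2) := by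
    rw [Real.rpow_add two_pos]
    congr 1
    rw [show (5/2:ℝ) = (5:ℝ) * (1/2) by norm_num, Real.rpow_mul (by norm_num : (0:ℝ) ≤ 2)]
    rw [show ((5:ℝ)) = ((5:ℕ):ℝ) by norm_num, Real.rpow_natCast]
    rw [show ((2:ℝ)^(5:ℕ)) = 32 by norm_num]
    rw [← Real.sqrt_eq_rpow]
    rw [show (32:ℝ) = 4^2 * 2 by norm_num, Real.sqrt_mul (by positivity) 2,
      Real.sqrt_sq (by norm_num : (0:ℝ) ≤ 4)]
  have hB2 : t^(-(p+1/2)) = t^(-p) * (Real.sqrt t)⁻¹ := by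
    rw [show (-(p+1/2):ℝ) = -p + -(1/2) by ring, Real.rpow_add ht]
    congr 1
    rw [Real.rpow_neg ht.le, Real.sqrt_eq_rpow]
  calc ‖φ t‖ ≤ 2 * (K * (2 * Real.sqrt 2 / Real.sqrt t)) := hmain
    _ = 2^(p + 5/2 : ℝ) * B * t ^ (-(p + 1/2)) := by
        rw [hA, hB2, hK]
        field_simp
        ring

lemma ladder (φ : ℝ → ℂ) (h1 : ∀ s, ‖φ s‖ ≤ 1) (hc : Continuous φ)
    (h2 : ∀ s : ℝ, 0 < s → ‖φ s‖ ≤ 2 / Real.sqrt s)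
    (hfact : ∀ t : ℝ, 0 < t → ‖φ t‖ ≤ ∫ u in (0:ℝ)..1, ‖φ (u*t)‖ * ‖φ ((1-u)*t)‖) :
    ∀ k : ℕ, ∀ t : ℝ, 0 < t →
      ‖φ t‖ ≤ 2 ^ ((((k:ℝ)+1)^2 + 11*((k:ℝ)+1))/4) * t ^ (-(((k:ℝ)+1)/2)) := by
  intro k
  induction k with
  | zero =>
    intro t ht
    have hst : 0 < Real.sqrt t := Real.sqrt_pos.mpr ht
    have hexp : ((((0:ℕ):ℝ)+1)^2 + 11*(((0:ℕ):ℝ)+1))/4 = (3:ℝ) := by norm_num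
    have hexp2 : -((((0:ℕ):ℝ)+1)/2) = -(1/2 : ℝ) := by norm_num
    rw [hexp, hexp2]
    have h8 : (2:ℝ)^(3:ℝ) = 8 := by
      rw [show (3:ℝ) = ((3:ℕ):ℝ) by norm_num, Real.rpow_natCast]
      norm_num
    have hth : t^(-(1/2):ℝ) = (Real.sqrt t)⁻¹ := by
      rw [Real.rpow_neg ht.le, Real.sqrt_eq_rpow]
    rw [h8, hth]
    have := h2 t ht
    rw [div_eq_mul_inv] at this
    have hinv : 0 ≤ (Real.sqrt t)⁻¹ := by positivity
    nlinarith [this]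
  | succ n ih =>
    intro t ht
    set p : ℝ := ((n:ℝ)+1)/2 with hp
    set e : ℝ := (((n:ℝ)+1)^2 + 11*((n:ℝ)+1))/4 with he
    have hstep := ladder_step φ h1 hc h2 hfact p ((2:ℝ)^e) (by positivity)
      (le_of_lt (Real.rpow_pos_of_pos two_pos e))
      (fun s hs => ih s hs) t ht
    have hcomb : (2:ℝ)^(p + 5/2 : ℝ) * (2:ℝ)^e = (2:ℝ)^(p + 5/2 + e) := by
      rw [← Real.rpow_add two_pos]
    have hexple : p + 5/2 + e ≤ ((((n:ℕ)+1:ℕ):ℝ)+1)^2/4 + 11*((((n:ℕ)+1:ℕ):ℝ)+1)/4 := by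
      push_cast
      rw [hp, he]
      ring_nf
      nlinarith [(Nat.cast_nonneg n : (0:ℝ) ≤ (n:ℝ))]
    have hmono : (2:ℝ)^(p + 5/2 + e) ≤ (2:ℝ)^(((((n:ℕ)+1:ℕ):ℝ)+1)^2/4 + 11*((((n:ℕ)+1:ℕ):ℝ)+1)/4) :=
      Real.rpow_le_rpow_of_exponent_le (by norm_num) hexple
    have hexpt : -(p + 1/2) = -(((((n:ℕ)+1:ℕ):ℝ)+1)/2) := by
      push_cast
      rw [hp]
      ring
    have htpos : (0:ℝ) < t ^ (-(p + 1/2)) := Real.rpow_pos_of_pos ht _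
    have H : ‖φ t‖ ≤ (2:ℝ)^(((((n:ℕ)+1:ℕ):ℝ)+1)^2/4 + 11*((((n:ℕ)+1:ℕ):ℝ)+1)/4) * t ^ (-(p + 1/2)) := by
      calc ‖φ t‖ ≤ 2^(p + 5/2 : ℝ) * (2:ℝ)^e * t ^ (-(p + 1/2)) := hstep
        _ = (2:ℝ)^(p + 5/2 + e) * t ^ (-(p + 1/2)) := by rw [hcomb]
        _ ≤ (2:ℝ)^(((((n:ℕ)+1:ℕ):ℝ)+1)^2/4 + 11*((((n:ℕ)+1:ℕ):ℝ)+1)/4) * t ^ (-(p + 1/2)) :=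
            mul_le_mul_of_nonneg_right hmono htpos.le
    have hEeq : ((((n:ℕ)+1:ℕ):ℝ)+1)^2/4 + 11*((((n:ℕ)+1:ℕ):ℝ)+1)/4
        = (((((n:ℕ)+1:ℕ):ℝ)+1)^2 + 11*((((n:ℕ)+1:ℕ):ℝ)+1))/4 := by ring
    rw [hEeq, hexpt] at H
    exact H

lemma final_interp (φ : ℝ → ℂ) (h1 : ∀ s, ‖φ s‖ ≤ 1)
    (hlad : ∀ k : ℕ, ∀ t : ℝ, 0 < t →
      ‖φ t‖ ≤ 2 ^ ((((k:ℝ)+1)^2 + 11*((k:ℝ)+1))/4) * t ^ (-(((k:ℝ)+1)/2)))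
    (p : ℝ) (hp : 0 < p) (t : ℝ) (ht : 0 < t) :
    t ^ p * ‖φ t‖ ≤ (2:ℝ) ^ (p^2 + 6*p) := by
  have htp : (0:ℝ) ≤ t ^ p := (Real.rpow_pos_of_pos ht p).le
  rcases le_or_gt t ((2:ℝ)^(p+6)) with hcase | hcase
  · -- small t
    have h1' : t ^ p * ‖φ t‖ ≤ t ^ p := by
      have := h1 t
      nlinarith [htp, norm_nonneg (φ t)]
    have h2' : t ^ p ≤ ((2:ℝ)^(p+6:ℝ)) ^ p := Real.rpow_le_rpow ht.le hcase hp.le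
    have h3' : ((2:ℝ)^(p+6:ℝ)) ^ p = (2:ℝ)^(p^2 + 6*p) := by
      rw [← Real.rpow_mul (by norm_num : (0:ℝ) ≤ 2)]
      congr 1
      ring
    linarith
  · -- large t
    set m : ℕ := ⌈2*p⌉₊ with hm
    have hmpos : 1 ≤ m := by
      rw [hm]
      exact Nat.one_le_iff_ne_zero.mpr (Nat.ceil_pos.mpr (by positivity)).ne'
    set k : ℕ := m - 1 with hk
    have hkm : k + 1 = m := Nat.succ_pred_eq_of_pos hmpos
    set M : ℝ := (m:ℝ) with hM
    have hcast : ((k:ℝ)+1) = M := by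
      rw [hM, ← hkm]
      push_cast
      ring
    have hMge : 2*p ≤ M := Nat.le_ceil _
    have hMlt : M < 2*p + 1 := by
      rw [hM, hm]
      exact Nat.ceil_lt_add_one (by positivity)
    have H := hlad k t ht
    rw [hcast] at H
    set E : ℝ := (M^2 + 11*M)/4 with hE
    have hEpos : (0:ℝ) < 2^E := Real.rpow_pos_of_pos two_pos E
    have hexp_nonpos : p - M/2 ≤ 0 := by linarith
    have h26 : (0:ℝ) < (2:ℝ)^(p+6:ℝ) := Real.rpow_pos_of_pos two_pos _
    have step1 : t ^ p * ‖φ t‖ ≤ 2^E * t ^ (p - M/2) := by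
      have h1m : t ^ p * ‖φ t‖ ≤ t ^ p * (2^E * t ^ (-(M/2))) :=
        mul_le_mul_of_nonneg_left H htp
      have h2m : t ^ p * (2^E * t ^ (-(M/2))) = 2^E * t ^ (p - M/2) := by
        rw [show p - M/2 = p + -(M/2) by ring, Real.rpow_add ht]
        ring
      linarith [h1m, h2m ▸ h1m]
    have step2 : t ^ (p - M/2) ≤ (2:ℝ)^((p+6)*(p - M/2)) := by
      have := Real.rpow_le_rpow_of_nonpos h26 hcase.le hexp_nonpos
      rw [← Real.rpow_mul (by norm_num : (0:ℝ) ≤ 2)] at this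
      exact this
    have step3 : E + (p+6)*(p - M/2) ≤ p^2 + 6*p := by
      rw [hE]
      nlinarith [hMge, hMlt, (by positivity : (0:ℝ) ≤ M)]
    calc t ^ p * ‖φ t‖ ≤ 2^E * t ^ (p - M/2) := step1
      _ ≤ 2^E * (2:ℝ)^((p+6)*(p - M/2)) :=
          mul_le_mul_of_nonneg_left step2 hEpos.le
      _ = (2:ℝ)^(E + (p+6)*(p - M/2)) := (Real.rpow_add two_pos _ _).symm
      _ ≤ (2:ℝ)^(p^2 + 6*p) := Real.rpow_le_rpow_of_exponent_le (by norm_num) step3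

lemma phi_norm_le_one {Ω : Type*} [MeasurableSpace Ω] (μ : Measure Ω) [IsProbabilityMeasure μ]
    (Y : Ω → ℝ) (t : ℝ) : ‖∫ ω, Complex.exp (Complex.I * t * Y ω) ∂μ‖ ≤ 1 := by
  calc ‖∫ ω, Complex.exp (Complex.I * t * Y ω) ∂μ‖
      ≤ ∫ ω, ‖Complex.exp (Complex.I * t * Y ω)‖ ∂μ := norm_integral_le_integral_norm _
    _ = ∫ _ω, (1:ℝ) ∂μ := by
        apply MeasureTheory.integral_congr_ae
        filter_upwards with ω
        rw [show Complex.I * (t:ℂ) * (Y ω:ℂ) = Complex.I * ((t * Y ω : ℝ):ℂ) by push_cast; ring]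
        exact norm_exp_I_mul_real _
    _ = 1 := by simp

lemma phi_continuous {Ω : Type*} [MeasurableSpace Ω] (μ : Measure Ω) [IsProbabilityMeasure μ]
    (Y : Ω → ℝ) (hY : Measurable Y) :
    Continuous (fun t : ℝ => ∫ ω, Complex.exp (Complex.I * t * Y ω) ∂μ) := by
  apply MeasureTheory.continuous_of_dominated (bound := fun _ => (1:ℝ))
  · intro t
    apply Measurable.aestronglyMeasurable
    exact Complex.measurable_exp.comp ((Complex.measurable_ofReal.comp hY).const_mul _)
  · intro t
    filter_upwards with ω
    rw [show Complex.I * (t:ℂ) * (Y ω:ℂ) = Complex.I * ((t * Y ω : ℝ):ℂ) by push_cast; ring,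
      norm_exp_I_mul_real]
  · exact integrable_const 1
  · filter_upwards with ω
    apply Complex.continuous_exp.comp
    exact (continuous_const.mul Complex.continuous_ofReal).mul continuous_const

lemma rep_lemma {Ω : Type*} [MeasurableSpace Ω] (μ : Measure Ω) [IsProbabilityMeasure μ]
    (Y Z U : Ω → ℝ) (hY : Measurable Y) (hZ : Measurable Z) (hU : Measurable U)
    (g : ℝ → ℝ) (hgm : Measurable g)
    (hindep : iIndepFun ![Y, Z, U] μ)
    (hZY : Measure.map Z μ = Measure.map Y μ)
    (hUunif : Measure.map U μ = volume.restrict (Set.Ioo (0:ℝ) 1))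
    (hfix : Measure.map (fun ω => U ω * Y ω + (1 - U ω) * Z ω + g (U ω)) μ = Measure.map Y μ)
    (t : ℝ) :
    ∫ ω, Complex.exp (Complex.I * t * Y ω) ∂μ
      = ∫ q : (ℝ × ℝ) × ℝ, Complex.exp (Complex.I * t * ((q.2 * q.1.1 + (1 - q.2) * q.1.2 + g q.2 : ℝ) : ℂ))
          ∂(((μ.map Y).prod (μ.map Y)).prod (volume.restrict (Set.Ioo (0:ℝ) 1))) := by
  set X : Ω → ℝ := fun ω => U ω * Y ω + (1 - U ω) * Z ω + g (U ω) with hX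
  have hXm : Measurable X := ((hU.mul hY).add ((measurable_const.sub hU).mul hZ)).add (hgm.comp hU)
  set F : (ℝ × ℝ) × ℝ → ℂ :=
    fun q => Complex.exp (Complex.I * t * ((q.2 * q.1.1 + (1 - q.2) * q.1.2 + g q.2 : ℝ) : ℂ)) with hF
  have hexprm : Measurable (fun q : (ℝ × ℝ) × ℝ => q.2 * q.1.1 + (1 - q.2) * q.1.2 + g q.2) := by
    apply Measurable.add
    · exact (measurable_snd.mul (measurable_fst.comp measurable_fst)).add
        ((measurable_const.sub measurable_snd).mul (measurable_snd.comp measurable_fst))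
    · exact hgm.comp measurable_snd
  have hFm : Measurable F :=
    Complex.measurable_exp.comp ((Complex.measurable_ofReal.comp hexprm).const_mul _)
  have hcont : Continuous (fun x : ℝ => Complex.exp (Complex.I * t * (x:ℂ))) := by
    apply Complex.continuous_exp.comp
    exact continuous_const.mul Complex.continuous_ofReal
  have h1 : ∫ ω, Complex.exp (Complex.I * t * Y ω) ∂μ
      = ∫ x, Complex.exp (Complex.I * t * (x:ℂ)) ∂(μ.map Y) :=
    (integral_map hY.aemeasurable hcont.aestronglyMeasurable).symm
  have h3 : ∫ x, Complex.exp (Complex.I * t * (x:ℂ)) ∂(μ.map X)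
      = ∫ ω, Complex.exp (Complex.I * t * (X ω : ℂ)) ∂μ :=
    integral_map hXm.aemeasurable hcont.aestronglyMeasurable
  set T : Ω → (ℝ × ℝ) × ℝ := fun ω => ((Y ω, Z ω), U ω) with hT
  have hTm : Measurable T := (hY.prodMk hZ).prodMk hU
  have h5 : ∫ ω, F (T ω) ∂μ = ∫ q, F q ∂(μ.map T) :=
    (integral_map hTm.aemeasurable hFm.aestronglyMeasurable).symm
  have hmeas_all : ∀ i, Measurable (![Y, Z, U] i) := by
    intro i
    fin_cases i
    · exact hY
    · exact hZ
    · exact hU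
  have hYZ : IndepFun Y Z μ := hindep.indepFun (show (0:Fin 3) ≠ 1 by decide)
  have hPair : IndepFun (fun ω => (Y ω, Z ω)) U μ :=
    hindep.indepFun_prodMk hmeas_all 0 1 2 (by decide) (by decide)
  have hmap1 : μ.map T = (μ.map (fun ω => (Y ω, Z ω))).prod (μ.map U) :=
    (indepFun_iff_map_prod_eq_prod_map_map ((hY.prodMk hZ)).aemeasurable hU.aemeasurable).mp hPair
  have hmap2 : μ.map (fun ω => (Y ω, Z ω)) = (μ.map Y).prod (μ.map Z) :=
    (indepFun_iff_map_prod_eq_prod_map_map hY.aemeasurable hZ.aemeasurable).mp hYZ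
  have hmapT : μ.map T = ((μ.map Y).prod (μ.map Y)).prod (volume.restrict (Set.Ioo (0:ℝ) 1)) := by
    rw [hmap1, hmap2, hZY, hUunif]
  have h4 : (fun ω => Complex.exp (Complex.I * t * (X ω : ℂ))) = fun ω => F (T ω) := rfl
  calc ∫ ω, Complex.exp (Complex.I * t * Y ω) ∂μ
      = ∫ x, Complex.exp (Complex.I * t * (x:ℂ)) ∂(μ.map Y) := h1
    _ = ∫ x, Complex.exp (Complex.I * t * (x:ℂ)) ∂(μ.map X) := by rw [hfix]
    _ = ∫ ω, Complex.exp (Complex.I * t * (X ω : ℂ)) ∂μ := h3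
    _ = ∫ ω, F (T ω) ∂μ := by rw [h4]
    _ = ∫ q, F q ∂(μ.map T) := h5
    _ = ∫ q, F q ∂(((μ.map Y).prod (μ.map Y)).prod (volume.restrict (Set.Ioo (0:ℝ) 1))) := by
        rw [hmapT]

lemma measurable_Fq (g : ℝ → ℝ) (hgm : Measurable g) (t : ℝ) :
    Measurable (fun q : (ℝ × ℝ) × ℝ =>
      Complex.exp (Complex.I * t * ((q.2 * q.1.1 + (1 - q.2) * q.1.2 + g q.2 : ℝ) : ℂ))) := by
  apply Complex.measurable_exp.comp
  apply Measurable.const_mul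
  apply Complex.measurable_ofReal.comp
  apply Measurable.add
  · exact (measurable_snd.mul (measurable_fst.comp measurable_fst)).add
      ((measurable_const.sub measurable_snd).mul (measurable_snd.comp measurable_fst))
  · exact hgm.comp measurable_snd

instance : IsProbabilityMeasure (volume.restrict (Set.Ioo (0:ℝ) 1)) := by
  constructor
  rw [Measure.restrict_apply_univ, Real.volume_Ioo]
  norm_num

lemma vdc_step2 (ν : Measure ℝ) [IsProbabilityMeasure ν] (g : ℝ → ℝ)
    (hg : ∀ u : ℝ, g u = 2 * u * Real.log u + 2 * (1 - u) * Real.log (1 - u) + 1)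
    (hgm : Measurable g) (t : ℝ) (ht : 0 < t) :
    ‖∫ q : (ℝ × ℝ) × ℝ, Complex.exp (Complex.I * t * ((q.2 * q.1.1 + (1 - q.2) * q.1.2 + g q.2 : ℝ) : ℂ))
        ∂((ν.prod ν).prod (volume.restrict (Set.Ioo (0:ℝ) 1)))‖ ≤ 2 / Real.sqrt t := by
  set υ : Measure ℝ := volume.restrict (Set.Ioo (0:ℝ) 1) with hυ
  set F : (ℝ × ℝ) × ℝ → ℂ :=
    fun q => Complex.exp (Complex.I * t * ((q.2 * q.1.1 + (1 - q.2) * q.1.2 + g q.2 : ℝ) : ℂ)) with hF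
  have hFm : Measurable F := measurable_Fq g hgm t
  have hFnorm : ∀ q, ‖F q‖ = 1 := by
    intro q
    rw [hF]
    simp only
    rw [show Complex.I * (t:ℂ) * ((q.2 * q.1.1 + (1 - q.2) * q.1.2 + g q.2 : ℝ) : ℂ)
      = Complex.I * ((t * (q.2 * q.1.1 + (1 - q.2) * q.1.2 + g q.2) : ℝ) : ℂ) by push_cast; ring]
    exact norm_exp_I_mul_real _
  have hInt : Integrable F ((ν.prod ν).prod υ) := by
    apply MeasureTheory.Integrable.mono' (integrable_const 1) hFm.aestronglyMeasurable
    filter_upwards with q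
    rw [hFnorm q]
  rw [MeasureTheory.integral_prod _ hInt]
  have hptw : ∀ p : ℝ × ℝ, ‖∫ u, F (p, u) ∂υ‖ ≤ 2 / Real.sqrt t := by
    intro p
    have hcongr : (fun u => F (p, u)) = fun u => Complex.exp (Complex.I *
        ((t * (u * p.1 + (1 - u) * p.2 + (2 * u * Real.log u + 2 * (1 - u) * Real.log (1 - u) + 1)) : ℝ) : ℂ)) := by
      funext u
      rw [hF]
      simp only
      rw [hg u]
      congr 1
      push_cast
      ring
    rw [hcongr]
    exact vdc_main t p.1 p.2 ht
  calc ‖∫ p, (∫ u, F (p, u) ∂υ) ∂(ν.prod ν)‖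
      ≤ ∫ p, ‖∫ u, F (p, u) ∂υ‖ ∂(ν.prod ν) := norm_integral_le_integral_norm _
    _ ≤ ∫ _p, 2 / Real.sqrt t ∂(ν.prod ν) := by
        apply MeasureTheory.integral_mono_of_nonneg
        · filter_upwards with p; exact norm_nonneg _
        · exact integrable_const _
        · filter_upwards with p; exact hptw p
    _ = 2 / Real.sqrt t := by simp

lemma fact_step2 (ν : Measure ℝ) [IsProbabilityMeasure ν] (g : ℝ → ℝ)
    (hgm : Measurable g) (φ : ℝ → ℂ)
    (hφν : ∀ s : ℝ, φ s = ∫ y, Complex.exp (Complex.I * s * (y:ℂ)) ∂ν) (t : ℝ) :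
    ∫ q : (ℝ × ℝ) × ℝ, Complex.exp (Complex.I * t * ((q.2 * q.1.1 + (1 - q.2) * q.1.2 + g q.2 : ℝ) : ℂ))
        ∂((ν.prod ν).prod (volume.restrict (Set.Ioo (0:ℝ) 1)))
      = ∫ u in Set.Ioo (0:ℝ) 1, φ (u*t) * φ ((1-u)*t) * Complex.exp (Complex.I * ((t * g u : ℝ) : ℂ)) := by
  set υ : Measure ℝ := volume.restrict (Set.Ioo (0:ℝ) 1) with hυ
  set F : (ℝ × ℝ) × ℝ → ℂ :=
    fun q => Complex.exp (Complex.I * t * ((q.2 * q.1.1 + (1 - q.2) * q.1.2 + g q.2 : ℝ) : ℂ)) with hF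
  have hFm : Measurable F := measurable_Fq g hgm t
  have hFnorm : ∀ q, ‖F q‖ = 1 := by
    intro q
    rw [hF]
    simp only
    rw [show Complex.I * (t:ℂ) * ((q.2 * q.1.1 + (1 - q.2) * q.1.2 + g q.2 : ℝ) : ℂ)
      = Complex.I * ((t * (q.2 * q.1.1 + (1 - q.2) * q.1.2 + g q.2) : ℝ) : ℂ) by push_cast; ring]
    exact norm_exp_I_mul_real _
  have hInt : Integrable F ((ν.prod ν).prod υ) := by
    apply MeasureTheory.Integrable.mono' (integrable_const 1) hFm.aestronglyMeasurable
    filter_upwards with q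
    rw [hFnorm q]
  rw [MeasureTheory.integral_prod_symm _ hInt]
  apply MeasureTheory.integral_congr_ae
  filter_upwards with u
  have hsplit : ∀ p : ℝ × ℝ, F (p, u)
      = (Complex.exp (Complex.I * ((u*t : ℝ):ℂ) * (p.1:ℂ))
          * Complex.exp (Complex.I * (((1-u)*t : ℝ):ℂ) * (p.2:ℂ)))
        * Complex.exp (Complex.I * ((t * g u : ℝ) : ℂ)) := by
    intro p
    rw [hF]
    simp only
    rw [← Complex.exp_add, ← Complex.exp_add]
    congr 1
    push_cast
    ring
  calc ∫ p, F (p, u) ∂(ν.prod ν)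
      = ∫ p : ℝ × ℝ, (Complex.exp (Complex.I * ((u*t : ℝ):ℂ) * (p.1:ℂ))
          * Complex.exp (Complex.I * (((1-u)*t : ℝ):ℂ) * (p.2:ℂ)))
        * Complex.exp (Complex.I * ((t * g u : ℝ) : ℂ)) ∂(ν.prod ν) := by
        apply MeasureTheory.integral_congr_ae
        filter_upwards with p
        exact hsplit p
    _ = (∫ p : ℝ × ℝ, Complex.exp (Complex.I * ((u*t : ℝ):ℂ) * (p.1:ℂ))
          * Complex.exp (Complex.I * (((1-u)*t : ℝ):ℂ) * (p.2:ℂ)) ∂(ν.prod ν))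
        * Complex.exp (Complex.I * ((t * g u : ℝ) : ℂ)) := by
        rw [MeasureTheory.integral_mul_const]
    _ = ((∫ y, Complex.exp (Complex.I * ((u*t : ℝ):ℂ) * (y:ℂ)) ∂ν)
          * ∫ z, Complex.exp (Complex.I * (((1-u)*t : ℝ):ℂ) * (z:ℂ)) ∂ν)
        * Complex.exp (Complex.I * ((t * g u : ℝ) : ℂ)) := by
        congr 1
        exact MeasureTheory.integral_prod_mul
          (fun y : ℝ => Complex.exp (Complex.I * ((u*t : ℝ):ℂ) * (y:ℂ)))
          (fun z : ℝ => Complex.exp (Complex.I * (((1-u)*t : ℝ):ℂ) * (z:ℂ)))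
    _ = φ (u*t) * φ ((1-u)*t) * Complex.exp (Complex.I * ((t * g u : ℝ) : ℂ)) := by
        rw [hφν (u*t), hφν ((1-u)*t)]

theorem quicksort_charfun_cp_bound
    {Ω : Type*} [MeasurableSpace Ω] (μ : Measure Ω) [IsProbabilityMeasure μ]
    (Y Z U : Ω → ℝ) (hY : Measurable Y) (hZ : Measurable Z) (hU : Measurable U)
    (g : ℝ → ℝ)
    (hg : ∀ u : ℝ, g u = 2 * u * Real.log u + 2 * (1 - u) * Real.log (1 - u) + 1)
    (hindep : iIndepFun ![Y, Z, U] μ)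
    (hZY : Measure.map Z μ = Measure.map Y μ)
    (hUunif : Measure.map U μ = volume.restrict (Ioo (0:ℝ) 1))
    (hfix : Measure.map (fun ω => U ω * Y ω + (1 - U ω) * Z ω + g (U ω)) μ
            = Measure.map Y μ)
    (hmean : ∫ ω, Y ω ∂μ = 0)
    (hvar : Integrable (fun ω => (Y ω)^2) μ)
    (φ : ℝ → ℂ)
    (hφ : ∀ t : ℝ, φ t = ∫ ω, Complex.exp (Complex.I * t * Y ω) ∂μ) :
    ∀ p : ℝ, 0 < p → ∀ t : ℝ, 0 < t →
      t ^ p * ‖φ t‖ ≤ (2:ℝ) ^ (p^2 + 6*p) := by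
  intro p hp t ht
  have hgm : Measurable g := by
    have hgeq : g = fun u => 2*u*Real.log u + 2*(1-u)*Real.log (1-u) + 1 := funext hg
    rw [hgeq]
    apply Measurable.add ?_ measurable_const
    apply Measurable.add
    · exact (measurable_const.mul measurable_id).mul Real.measurable_log
    · exact (measurable_const.mul (measurable_const.sub measurable_id)).mul
        (Real.measurable_log.comp (measurable_const.sub measurable_id))
  haveI : IsProbabilityMeasure (μ.map Y) := Measure.isProbabilityMeasure_map hY.aemeasurable
  have h1 : ∀ s, ‖φ s‖ ≤ 1 := fun s => by rw [hφ s]; exact phi_norm_le_one μ Y s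
  have hcφ : Continuous φ := by
    have : φ = fun s : ℝ => ∫ ω, Complex.exp (Complex.I * s * Y ω) ∂μ := funext hφ
    rw [this]
    exact phi_continuous μ Y hY
  have hcont : ∀ s : ℝ, Continuous (fun x : ℝ => Complex.exp (Complex.I * s * (x:ℂ))) := by
    intro s
    apply Complex.continuous_exp.comp
    exact continuous_const.mul Complex.continuous_ofReal
  have hφν : ∀ s : ℝ, φ s = ∫ y, Complex.exp (Complex.I * s * (y:ℂ)) ∂(μ.map Y) := by
    intro s
    rw [hφ s]
    exact (integral_map hY.aemeasurable (hcont s).aestronglyMeasurable).symm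
  have hrep : ∀ s : ℝ, φ s = ∫ q : (ℝ × ℝ) × ℝ,
      Complex.exp (Complex.I * s * ((q.2 * q.1.1 + (1 - q.2) * q.1.2 + g q.2 : ℝ) : ℂ))
        ∂(((μ.map Y).prod (μ.map Y)).prod (volume.restrict (Set.Ioo (0:ℝ) 1))) := by
    intro s
    rw [hφ s]
    exact rep_lemma μ Y Z U hY hZ hU g hgm hindep hZY hUunif hfix s
  have h2 : ∀ s : ℝ, 0 < s → ‖φ s‖ ≤ 2 / Real.sqrt s := by
    intro s hs
    rw [hrep s]
    exact vdc_step2 (μ.map Y) g hg hgm s hs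
  have hfactnorm : ∀ s : ℝ, 0 < s →
      ‖φ s‖ ≤ ∫ u in (0:ℝ)..1, ‖φ (u*s)‖ * ‖φ ((1-u)*s)‖ := by
    intro s hs
    have heq : φ s = ∫ u in Set.Ioo (0:ℝ) 1,
        φ (u*s) * φ ((1-u)*s) * Complex.exp (Complex.I * ((s * g u : ℝ) : ℂ)) := by
      rw [hrep s]
      exact fact_step2 (μ.map Y) g hgm φ hφν s
    rw [heq]
    calc ‖∫ u in Set.Ioo (0:ℝ) 1,
          φ (u*s) * φ ((1-u)*s) * Complex.exp (Complex.I * ((s * g u : ℝ) : ℂ))‖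
        ≤ ∫ u in Set.Ioo (0:ℝ) 1,
          ‖φ (u*s) * φ ((1-u)*s) * Complex.exp (Complex.I * ((s * g u : ℝ) : ℂ))‖ :=
          norm_integral_le_integral_norm _
      _ = ∫ u in Set.Ioo (0:ℝ) 1, ‖φ (u*s)‖ * ‖φ ((1-u)*s)‖ := by
          apply MeasureTheory.integral_congr_ae
          filter_upwards with u
          rw [norm_mul, norm_mul, norm_exp_I_mul_real, mul_one]
      _ = ∫ u in (0:ℝ)..1, ‖φ (u*s)‖ * ‖φ ((1-u)*s)‖ := by
          rw [intervalIntegral.integral_of_le zero_le_one, integral_Ioc_eq_integral_Ioo]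
  exact final_interp φ h1 (ladder φ h1 hcφ h2 hfactnorm) p hp t ht
end

section
/- Let g : (0,∞) → ℂ be twice differentiable, and suppose A, B, p > 0 satisfy |g(t)| ≤ A t^{-p} and |g''(t)| ≤ B for all t > 0. Then |g'(t)| ≤ 2√(AB) t^{-p/2} for all t > 0. -/
open Set Real

lemma taylor2_bound (g g' g'' : ℝ → ℂ) (B t h : ℝ) (hh : 0 ≤ h)
    (hd1 : ∀ s ∈ Icc t (t+h), HasDerivAt g (g' s) s)
    (hd2 : ∀ s ∈ Icc t (t+h), HasDerivAt g' (g'' s) s)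
    (hB : ∀ s ∈ Icc t (t+h), ‖g'' s‖ ≤ B) :
    ‖g (t+h) - g t - h • g' t‖ ≤ B/2 * h^2 := by
  have step1 : ∀ x ∈ Icc t (t+h), ‖g' x - g' t‖ ≤ B * (x - t) := by
    have := norm_image_sub_le_of_norm_deriv_le_segment'
      (f := g') (f' := g'') (a := t) (b := t+h) (C := B)
      (fun s hs => (hd2 s hs).hasDerivWithinAt)
      (fun s hs => hB s ⟨hs.1, hs.2.le⟩)
    exact this
  set f : ℝ → ℂ := fun s => g s - g t - (s - t) • g' t with hf
  have hfd : ∀ s ∈ Icc t (t+h), HasDerivAt f (g' s - g' t) s := by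
    intro s hs
    have h1 : HasDerivAt (fun s : ℝ => (s - t) • g' t) ((1 : ℝ) • g' t) s :=
      (((hasDerivAt_id s).sub_const t)).smul_const (g' t)
    have := ((hd1 s hs).sub_const (g t)).sub h1
    rw [one_smul] at this
    exact this
  have key : ∀ x ∈ Icc t (t+h), ‖f x‖ ≤ B/2 * (x - t)^2 := by
    have := image_norm_le_of_norm_deriv_right_le_deriv_boundary
      (f := f) (f' := fun s => g' s - g' t) (a := t) (b := t+h)
      (B := fun s => B/2 * (s - t)^2) (B' := fun s => B * (s - t))
      (fun s hs => ((hfd s hs).continuousAt).continuousWithinAt)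
      (fun s hs => ((hfd s ⟨hs.1, hs.2.le⟩).hasDerivWithinAt))
      (by simp [hf])
      (fun x => by
        have h1 : HasDerivAt (fun s : ℝ => (s - t)^2) (2 * (x - t)) x := by
          have h0 : HasDerivAt (fun s : ℝ => s - t) 1 x := (hasDerivAt_id x).sub_const t
          simpa [mul_comm] using (h0.fun_pow 2)
        have := h1.const_mul (B/2)
        rw [show B * (x - t) = B / 2 * (2 * (x - t)) by ring]
        exact this)
      (fun x hx => step1 x ⟨hx.1, hx.2.le⟩)
    exact this
  have hend := key (t+h) ⟨by linarith, le_refl _⟩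
  simpa [hf] using hend

theorem deriv_bound_interpolation
    (g g' g'' : ℝ → ℂ) (A B p : ℝ) (hA : 0 < A) (hB : 0 < B) (hp : 0 < p)
    (hd1 : ∀ t : ℝ, 0 < t → HasDerivAt g (g' t) t)
    (hd2 : ∀ t : ℝ, 0 < t → HasDerivAt g' (g'' t) t)
    (hg : ∀ t : ℝ, 0 < t → ‖g t‖ ≤ A * t ^ (-p))
    (hg'' : ∀ t : ℝ, 0 < t → ‖g'' t‖ ≤ B) :
    ∀ t : ℝ, 0 < t → ‖g' t‖ ≤ 2 * Real.sqrt (A * B) * t ^ (-p/2) := by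
  intro t ht
  set h : ℝ := 2 * Real.sqrt (A / B) * t ^ (-p/2) with hh_def
  have htp : (0:ℝ) < t ^ (-p/2) := Real.rpow_pos_of_pos ht _
  have hsq : (0:ℝ) < Real.sqrt (A / B) := Real.sqrt_pos.2 (div_pos hA hB)
  have hh : 0 < h := by positivity
  have hmem : ∀ s ∈ Icc t (t+h), 0 < s := fun s hs => lt_of_lt_of_le ht hs.1
  have tay := taylor2_bound g g' g'' B t h hh.le
    (fun s hs => hd1 s (hmem s hs)) (fun s hs => hd2 s (hmem s hs))
    (fun s hs => hg'' s (hmem s hs))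
  have hb1 : ‖g (t+h)‖ ≤ A * t ^ (-p) := by
    refine le_trans (hg (t+h) (by linarith)) ?_
    have : (t+h) ^ (-p) ≤ t ^ (-p) :=
      Real.rpow_le_rpow_of_nonpos ht (by linarith) (by linarith)
    exact mul_le_mul_of_nonneg_left this hA.le
  have hb2 : ‖g t‖ ≤ A * t ^ (-p) := hg t ht
  have hnorm : h * ‖g' t‖ ≤ 2 * (A * t ^ (-p)) + B/2 * h^2 := by
    have hdecomp : h • g' t = -(g (t+h) - g t - h • g' t) + (g (t+h) - g t) := by module
    have : ‖h • g' t‖ ≤ B/2 * h^2 + (‖g (t+h)‖ + ‖g t‖) := by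
      rw [hdecomp]
      refine le_trans (norm_add_le _ _) ?_
      gcongr
      · rw [norm_neg]; exact tay
      · exact norm_sub_le _ _
    rw [norm_smul, Real.norm_eq_abs, abs_of_pos hh] at this
    linarith
  have hgt : ‖g' t‖ ≤ (2 * (A * t ^ (-p)) + B/2 * h^2) / h :=
    (le_div_iff₀ hh).2 (by linarith [hnorm])
  refine hgt.trans_eq ?_
  -- algebra
  set a := Real.sqrt A with ha
  set b := Real.sqrt B with hb
  have ha2 : a^2 = A := Real.sq_sqrt hA.le
  have hb2' : b^2 = B := Real.sq_sqrt hB.le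
  have hapos : 0 < a := Real.sqrt_pos.2 hA
  have hbpos : 0 < b := Real.sqrt_pos.2 hB
  have hab : Real.sqrt (A * B) = a * b := Real.sqrt_mul hA.le B
  have hdiv : Real.sqrt (A / B) = a / b := Real.sqrt_div hA.le B
  set u := t ^ (-p/2) with hu
  have hu2 : u * u = t ^ (-p) := by
    rw [hu, ← Real.rpow_add ht]; norm_num
  rw [hh_def, hdiv, hab, ← hu2, ← ha2, ← hb2']
  field_simp
  ring
end

section
/- Suppose f : ℝ → ℝ is a continuous probability density which is positive almost everywhere and satisfies f(x) = ∫_0^1 ∫_ℝ f(y) f((x - g(u) - (1-u)y)/u)(1/u) dy du for all x, with g(u) = 2u ln u + 2(1-u) ln(1-u) + 1. Then f(x) > 0 for every real x. -/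
open Set Real MeasureTheory ENNReal

theorem density_everywhere_positive
    (f : ℝ → ℝ) (hfc : Continuous f) (hf0 : ∀ x : ℝ, 0 ≤ f x)
    (hf1 : ∫ x : ℝ, f x = 1)
    (hae : ∀ᵐ x : ℝ, 0 < f x)
    (g : ℝ → ℝ)
    (hg : ∀ u : ℝ, g u = 2 * u * Real.log u + 2 * (1 - u) * Real.log (1 - u) + 1)
    (heq : ∀ x : ℝ, f x = ∫ u in Ioo (0:ℝ) 1,
        ∫ y : ℝ, f y * f ((x - g u - (1 - u) * y) / u) * (1 / u)) :
    ∀ x : ℝ, 0 < f x := by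
  intro x0
  have hfm : Measurable f := hfc.measurable
  have hfi : Integrable f := by
    by_contra h
    rw [integral_undef h] at hf1
    norm_num at hf1
  have hlf : ∫⁻ x, ENNReal.ofReal (f x) = 1 := by
    rw [← ofReal_integral_eq_lintegral_ofReal hfi (Filter.Eventually.of_forall hf0), hf1,
      ENNReal.ofReal_one]
  have hgm : Measurable g := by
    have : g = fun u => 2 * u * Real.log u + 2 * (1 - u) * Real.log (1 - u) + 1 := funext hg
    rw [this]
    exact (((measurable_const.mul measurable_id).mul Real.measurable_log).add
      ((measurable_const.mul (measurable_const.sub measurable_id)).mul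
        (Real.measurable_log.comp (measurable_const.sub measurable_id)))).add measurable_const
  -- the nonnegative integrand
  set H : ℝ → ℝ → ℝ → ℝ≥0∞ :=
    fun x u y => ENNReal.ofReal (f y * f ((x - g u - (1 - u) * y) / u) * (1 / u)) with hH
  have hHm : Measurable (fun p : ℝ × ℝ × ℝ => H p.1 p.2.1 p.2.2) := by
    apply ENNReal.measurable_ofReal.comp
    have h1 : Measurable fun p : ℝ × ℝ × ℝ => f p.2.2 :=
      hfm.comp (measurable_snd.comp measurable_snd)
    have hu : Measurable fun p : ℝ × ℝ × ℝ => p.2.1 :=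
      measurable_fst.comp measurable_snd
    have h2 : Measurable fun p : ℝ × ℝ × ℝ =>
        f ((p.1 - g p.2.1 - (1 - p.2.1) * p.2.2) / p.2.1) := by
      apply hfm.comp
      exact ((measurable_fst.sub (hgm.comp hu)).sub
        ((measurable_const.sub hu).mul (measurable_snd.comp measurable_snd))).div hu
    exact (h1.mul h2).mul (measurable_const.div hu)
  -- change of variables
  have cov : ∀ c u : ℝ, 0 < u → ∫⁻ x, ENNReal.ofReal (f ((x - c) / u)) = ENNReal.ofReal u := by
    intro c u hu
    have h1 : Integrable (fun x : ℝ => f ((x - c) / u)) := by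
      exact (hfi.comp_div (ne_of_gt hu)).comp_sub_right c
    rw [← ofReal_integral_eq_lintegral_ofReal h1
      (Filter.Eventually.of_forall (fun x => hf0 _))]
    have h2 : (∫ x : ℝ, f ((x - c) / u)) = u := by
      rw [integral_sub_right_eq_self (fun x => f (x / u)) c]
      rw [MeasureTheory.Measure.integral_comp_div f u, hf1]
      simp [abs_of_pos hu]
    rw [h2]
  -- the key finiteness
  have hKm : Measurable (fun p : ℝ × ℝ => ∫⁻ y, H p.1 p.2 y) := by
    have h1 : Measurable (fun q : (ℝ × ℝ) × ℝ => H q.1.1 q.1.2 q.2) :=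
      hHm.comp MeasurableEquiv.prodAssoc.measurable
    exact h1.lintegral_prod_right'
  set A : ℝ → ℝ≥0∞ := fun x => ∫⁻ u in Ioo (0:ℝ) 1, ∫⁻ y, H x u y with hA
  have hAm : Measurable A := hKm.lintegral_prod_right'
  have key : ∫⁻ x, A x = 1 := by
    have swap1 : ∫⁻ x, A x
        = ∫⁻ u in Ioo (0:ℝ) 1, ∫⁻ x, ∫⁻ y, H x u y := by
      exact lintegral_lintegral_swap hKm.aemeasurable
    rw [swap1]
    have inner : ∀ u ∈ Ioo (0:ℝ) 1, (∫⁻ x, ∫⁻ y, H x u y) = 1 := by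
      intro u hu
      have hum : Measurable (fun q : ℝ × ℝ => H q.1 u q.2) := by
        have : (fun q : ℝ × ℝ => H q.1 u q.2)
            = (fun p : ℝ × ℝ × ℝ => H p.1 p.2.1 p.2.2) ∘ (fun q => (q.1, u, q.2)) := rfl
        rw [this]
        exact hHm.comp ((measurable_fst.prodMk (measurable_const.prodMk measurable_snd)))
      rw [lintegral_lintegral_swap hum.aemeasurable]
      have hx : ∀ y : ℝ, (∫⁻ x, H x u y) = ENNReal.ofReal (f y) := by
        intro y
        have e1 : ∀ x : ℝ, H x u y = (ENNReal.ofReal (f y) * ENNReal.ofReal (1 / u))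
            * ENNReal.ofReal (f ((x - (g u + (1 - u) * y)) / u)) := by
          intro x
          simp only [hH]
          rw [sub_sub, ENNReal.ofReal_mul (mul_nonneg (hf0 _) (hf0 _)),
            ENNReal.ofReal_mul (hf0 _)]
          ring
        simp only [e1]
        rw [lintegral_const_mul' _ _ (ENNReal.mul_ne_top ENNReal.ofReal_ne_top
          ENNReal.ofReal_ne_top)]
        rw [cov (g u + (1 - u) * y) u hu.1]
        rw [mul_assoc, ← ENNReal.ofReal_mul (one_div_nonneg.mpr hu.1.le), one_div,
          inv_mul_cancel₀ (ne_of_gt hu.1), ENNReal.ofReal_one, mul_one]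
      simp only [hx]
      exact hlf
    rw [setLIntegral_congr_fun measurableSet_Ioo inner]
    simp [Real.volume_Ioo]
  have hgood : ∀ᵐ x : ℝ, A x < ⊤ := by
    apply ae_lt_top hAm
    rw [key]; exact one_ne_top
  -- lower bound at good points
  have lower : ∀ x : ℝ, A x < ⊤ → ∀ a b p q c : ℝ, a < b → p < q → Ioo a b ⊆ Ioo 0 1 → 0 ≤ c →
      (∀ u ∈ Ioo a b, ∀ y ∈ Ioo p q, c ≤ f y * f ((x - g u - (1 - u) * y) / u) * (1 / u)) →
      c * (b - a) * (q - p) ≤ f x := by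
    intro x hAx a b p q c hab hpq hsub hc hbound
    have hFm : ∀ u : ℝ, Measurable fun y : ℝ => f y * f ((x - g u - (1 - u) * y) / u) * (1 / u) := by
      intro u
      exact (hfm.mul (hfm.comp ((measurable_const.sub
        (measurable_const.mul measurable_id)).div_const u))).mul_const _
    have e1 : EqOn (fun u : ℝ => ∫ y : ℝ, f y * f ((x - g u - (1 - u) * y) / u) * (1 / u))
        (fun u : ℝ => (∫⁻ y, H x u y).toReal) (Ioo (0:ℝ) 1) := by
      intro u hu
      simp only
      rw [MeasureTheory.integral_eq_lintegral_of_nonneg_ae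
        (Filter.Eventually.of_forall fun y => mul_nonneg (mul_nonneg (hf0 _) (hf0 _))
          (one_div_nonneg.mpr hu.1.le)) (hFm u).aestronglyMeasurable]
    have hmeas : AEMeasurable (fun u => ∫⁻ y, H x u y) (volume.restrict (Ioo (0:ℝ) 1)) :=
      (hKm.comp (measurable_const.prodMk measurable_id)).aemeasurable
    have e2 : f x = (A x).toReal := by
      rw [heq x, setIntegral_congr_fun measurableSet_Ioo e1]
      exact integral_toReal hmeas (ae_lt_top' hmeas (ne_of_lt hAx))
    have hBle : ENNReal.ofReal c * volume (Ioo p q) * volume (Ioo a b) ≤ A x := by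
      calc ENNReal.ofReal c * volume (Ioo p q) * volume (Ioo a b)
          = ∫⁻ _ in Ioo a b, ENNReal.ofReal c * volume (Ioo p q) := by
            rw [setLIntegral_const]
        _ ≤ ∫⁻ u in Ioo a b, ∫⁻ y in Ioo p q, H x u y := by
            refine setLIntegral_mono' measurableSet_Ioo (fun u hu => ?_)
            rw [← setLIntegral_const (Ioo p q) (ENNReal.ofReal c)]
            exact setLIntegral_mono' measurableSet_Ioo
              (fun y hy => ENNReal.ofReal_le_ofReal (hbound u hu y hy))
        _ ≤ ∫⁻ u in Ioo a b, ∫⁻ y, H x u y :=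
            setLIntegral_mono' measurableSet_Ioo (fun u _ => setLIntegral_le_lintegral _ _)
        _ ≤ A x := lintegral_mono_set hsub
    have h3 := ENNReal.toReal_mono (ne_of_lt hAx) hBle
    rw [Real.volume_Ioo, Real.volume_Ioo, ENNReal.toReal_mul, ENNReal.toReal_mul,
      ENNReal.toReal_ofReal hc, ENNReal.toReal_ofReal (by linarith),
      ENNReal.toReal_ofReal (by linarith)] at h3
    rw [e2]
    nlinarith [h3]
  -- continuity of g inside (0,1)
  have hgc : ∀ u : ℝ, u ∈ Ioo (0:ℝ) 1 → ContinuousAt g u := by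
    intro u hu
    have hgeq : g = fun u => 2 * u * Real.log u + 2 * (1 - u) * Real.log (1 - u) + 1 := funext hg
    rw [hgeq]
    have h1 : ContinuousAt (fun u : ℝ => 2 * u * Real.log u) u :=
      (continuousAt_const.mul continuousAt_id).mul (Real.continuousAt_log (ne_of_gt hu.1))
    have h2 : ContinuousAt (fun u : ℝ => 2 * (1 - u) * Real.log (1 - u)) u := by
      have hsub : ContinuousAt (fun u : ℝ => 1 - u) u := continuousAt_const.sub continuousAt_id
      exact (continuousAt_const.mul hsub).mul
        ((Real.continuousAt_log (ne_of_gt (by linarith [hu.2] : (0:ℝ) < 1 - u))).comp hsub)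
    exact (h1.add h2).add continuousAt_const
  -- bounds on g
  have hgub : ∀ u ∈ Ioo (0:ℝ) 1, g u ≤ 1 := by
    intro u hu
    rw [hg]
    have h1 : Real.log u ≤ 0 := Real.log_nonpos hu.1.le hu.2.le
    have h2 : Real.log (1 - u) ≤ 0 := Real.log_nonpos (by linarith [hu.2]) (by linarith [hu.1])
    nlinarith [hu.1.le, hu.2.le]
  have hglb : ∀ u ∈ Ioo (0:ℝ) 1, -1 ≤ g u := by
    intro u hu
    rw [hg]
    have hA := Real.log_le_sub_one_of_pos (inv_pos.mpr hu.1)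
    rw [Real.log_inv] at hA
    have hB := Real.log_le_sub_one_of_pos (inv_pos.mpr (by linarith [hu.2] : (0:ℝ) < 1 - u))
    rw [Real.log_inv] at hB
    have hu1 : u * u⁻¹ = 1 := mul_inv_cancel₀ (ne_of_gt hu.1)
    have hu2 : (1 - u) * (1 - u)⁻¹ = 1 := mul_inv_cancel₀ (ne_of_gt (by linarith [hu.2] : (0:ℝ) < 1 - u))
    nlinarith [hu.1, hu.2, mul_le_mul_of_nonneg_left hA hu.1.le,
      mul_le_mul_of_nonneg_left hB (by linarith [hu.2] : (0:ℝ) ≤ 1 - u)]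
  -- points of positivity far out
  have hOlow : ∀ a : ℝ, ∃ y, y < a ∧ 0 < f y := by
    intro a
    by_contra h
    push_neg at h
    have hsub : Iio a ⊆ {y : ℝ | ¬ 0 < f y} := fun y hy => not_lt.mpr (h y hy)
    have h0 : volume (Iio a) = 0 := measure_mono_null hsub (ae_iff.mp hae)
    simp [Real.volume_Iio] at h0
  have hOhigh : ∀ a : ℝ, ∃ z, a < z ∧ 0 < f z := by
    intro a
    by_contra h
    push_neg at h
    have hsub : Ioi a ⊆ {y : ℝ | ¬ 0 < f y} := fun y hy => not_lt.mpr (h y hy)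
    have h0 : volume (Ioi a) = 0 := measure_mono_null hsub (ae_iff.mp hae)
    simp [Real.volume_Ioi] at h0
  -- geometry: find u0 ∈ (0,1), y0 with f y0 > 0 and f z0 > 0, x0 = u0 z0 + (1-u0) y0 + g u0
  have geom : ∃ u0 ∈ Ioo (0:ℝ) 1, ∃ y0 : ℝ, 0 < f y0 ∧
      0 < f ((x0 - g u0 - (1 - u0) * y0) / u0) := by
    obtain ⟨y0, hy0lt, hy0pos⟩ := hOlow (x0 - 2)
    obtain ⟨z0, hz0gt, hz0pos⟩ := hOhigh (x0 + 2)
    obtain ⟨d, hd⟩ : ∃ d : ℝ, d = z0 - y0 := ⟨_, rfl⟩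
    obtain ⟨u1, hu1def⟩ : ∃ u1 : ℝ, u1 = (x0 - y0 - 1) / (2 * d) := ⟨_, rfl⟩
    obtain ⟨u2, hu2def⟩ : ∃ u2 : ℝ, u2 = 1 - (z0 - x0 - 1) / (2 * d) := ⟨_, rfl⟩
    have hd4 : 4 < d := by rw [hd]; linarith
    have hd0 : (0:ℝ) < 2 * d := by linarith
    have hxy1 : 1 < x0 - y0 - 1 := by linarith
    have hzx1 : 1 < z0 - x0 - 1 := by linarith
    have hxyd : x0 - y0 - 1 < d := by linarith
    have hzxd : z0 - x0 - 1 < d := by linarith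
    have hu1pos : 0 < u1 := by rw [hu1def]; exact div_pos (by linarith) hd0
    have hu1half : u1 < 1/2 := by
      rw [hu1def, div_lt_iff₀ hd0]; linarith
    have hu2half : 1/2 < u2 := by
      rw [hu2def]
      have : (z0 - x0 - 1)/(2*d) < 1/2 := by rw [div_lt_iff₀ hd0]; linarith
      linarith
    have hu2lt : u2 < 1 := by
      rw [hu2def]
      have : 0 < (z0 - x0 - 1)/(2*d) := div_pos (by linarith) hd0
      linarith
    have hu12 : u1 ≤ u2 := by linarith
    have hsub2 : Icc u1 u2 ⊆ Ioo (0:ℝ) 1 := fun u hu =>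
      ⟨lt_of_lt_of_le hu1pos hu.1, lt_of_le_of_lt hu.2 hu2lt⟩
    have hφc : ContinuousOn (fun u => u * z0 + (1 - u) * y0 + g u) (Icc u1 u2) := by
      intro u hu
      exact (((continuousAt_id.mul continuousAt_const).add
        ((continuousAt_const.sub continuousAt_id).mul continuousAt_const)).add
        (hgc u (hsub2 hu))).continuousWithinAt
    have hu1d : u1 * d = (x0 - y0 - 1)/2 := by
      rw [hu1def]; field_simp
    have hu2d : (1 - u2) * d = (z0 - x0 - 1)/2 := by
      rw [hu2def]; field_simp; ring
    have hφ1 : u1 * z0 + (1 - u1) * y0 + g u1 ≤ x0 := by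
      have hb := hgub u1 (hsub2 ⟨le_refl u1, hu12⟩)
      have : u1 * z0 + (1 - u1) * y0 = y0 + u1 * d := by rw [hd]; ring
      nlinarith [hu1d]
    have hφ2 : x0 ≤ u2 * z0 + (1 - u2) * y0 + g u2 := by
      have hb := hglb u2 (hsub2 ⟨hu12, le_refl u2⟩)
      have : u2 * z0 + (1 - u2) * y0 = z0 - (1 - u2) * d := by rw [hd]; ring
      nlinarith [hu2d]
    have hIVT := intermediate_value_Icc hu12 hφc
    obtain ⟨u0, hu0mem, hφu0⟩ := hIVT ⟨hφ1, hφ2⟩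
    have hu0 : u0 ∈ Ioo (0:ℝ) 1 := hsub2 hu0mem
    refine ⟨u0, hu0, y0, hy0pos, ?_⟩
    have hz0eq : (x0 - g u0 - (1 - u0) * y0) / u0 = z0 := by
      have h5 : u0 * z0 + (1 - u0) * y0 + g u0 = x0 := hφu0
      have hu0ne : u0 ≠ 0 := ne_of_gt hu0.1
      field_simp
      linarith
    rw [hz0eq]
    exact hz0pos
  obtain ⟨u0, hu0, y0, hy0, hz0⟩ := geom
  -- continuity: positivity on a box around (x0, u0, y0)
  have hu0pos : 0 < u0 := hu0.1
  have hu0lt : u0 < 1 := hu0.2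
  have hv : 0 < f y0 * f ((x0 - g u0 - (1 - u0) * y0) / u0) * (1 / u0) :=
    mul_pos (mul_pos hy0 hz0) (one_div_pos.mpr hu0pos)
  obtain ⟨c, hc0, hcv⟩ : ∃ c : ℝ, 0 < c ∧
      c < f y0 * f ((x0 - g u0 - (1 - u0) * y0) / u0) * (1 / u0) :=
    ⟨_, half_pos hv, half_lt_self hv⟩
  have hcont : ContinuousAt (fun p : ℝ × ℝ × ℝ =>
      f p.2.2 * f ((p.1 - g p.2.1 - (1 - p.2.1) * p.2.2) / p.2.1) * (1 / p.2.1))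
      (x0, u0, y0) := by
    have h1 : ContinuousAt (fun p : ℝ × ℝ × ℝ => p.2.1) (x0, u0, y0) :=
      (continuous_fst.comp continuous_snd).continuousAt
    have h2 : ContinuousAt (fun p : ℝ × ℝ × ℝ => p.2.2) (x0, u0, y0) :=
      (continuous_snd.comp continuous_snd).continuousAt
    have h3 : ContinuousAt (fun p : ℝ × ℝ × ℝ => p.1) (x0, u0, y0) :=
      continuous_fst.continuousAt
    have hgat : ContinuousAt (fun p : ℝ × ℝ × ℝ => g p.2.1) (x0, u0, y0) :=
      (hgc u0 hu0).comp h1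
    have harg : ContinuousAt (fun p : ℝ × ℝ × ℝ =>
        (p.1 - g p.2.1 - (1 - p.2.1) * p.2.2) / p.2.1) (x0, u0, y0) :=
      ((h3.sub hgat).sub ((continuousAt_const.sub h1).mul h2)).div h1 (ne_of_gt hu0pos)
    exact ((hfc.continuousAt.comp h2).mul (hfc.continuousAt.comp harg)).mul
      (continuousAt_const.div h1 (ne_of_gt hu0pos))
  have hev : ∀ᶠ p : ℝ × ℝ × ℝ in nhds (x0, u0, y0),
      c < f p.2.2 * f ((p.1 - g p.2.1 - (1 - p.2.1) * p.2.2) / p.2.1) * (1 / p.2.1) :=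
    hcont.eventually (eventually_gt_nhds hcv)
  obtain ⟨ε, hε, hball⟩ := Metric.eventually_nhds_iff.mp hev
  obtain ⟨δ, hδ0, hδε, hδu, hδ1u⟩ : ∃ δ : ℝ, 0 < δ ∧ δ < ε ∧ δ < u0 ∧ δ < 1 - u0 := by
    refine ⟨min (ε/2) (min (u0/2) ((1-u0)/2)), ?_, ?_, ?_, ?_⟩
    · exact lt_min (half_pos hε) (lt_min (half_pos hu0pos) (half_pos (by linarith)))
    · calc min (ε/2) (min (u0/2) ((1-u0)/2)) ≤ ε/2 := min_le_left _ _
        _ < ε := half_lt_self hε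
    · calc min (ε/2) (min (u0/2) ((1-u0)/2)) ≤ u0/2 := le_trans (min_le_right _ _) (min_le_left _ _)
        _ < u0 := half_lt_self hu0pos
    · calc min (ε/2) (min (u0/2) ((1-u0)/2)) ≤ (1-u0)/2 :=
          le_trans (min_le_right _ _) (min_le_right _ _)
        _ < 1 - u0 := half_lt_self (by linarith)
  have hboxsub : Ioo (u0 - δ) (u0 + δ) ⊆ Ioo (0:ℝ) 1 := by
    intro u hu
    exact ⟨by linarith [hu.1], by linarith [hu.2]⟩
  -- every good point near x0 has f ≥ m
  have hm : ∀ x' : ℝ, |x' - x0| < δ → A x' < ⊤ →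
      c * ((u0 + δ) - (u0 - δ)) * ((y0 + δ) - (y0 - δ)) ≤ f x' := by
    intro x' hx' hAx'
    refine lower x' hAx' (u0 - δ) (u0 + δ) (y0 - δ) (y0 + δ) c (by linarith) (by linarith)
      hboxsub hc0.le ?_
    intro u hu y hy
    have h1 : dist x' x0 < ε := by rw [Real.dist_eq]; linarith [hx']
    have h2 : dist u u0 < ε := by
      rw [Real.dist_eq, abs_sub_lt_iff]
      constructor <;> [linarith [hu.2]; linarith [hu.1]]
    have h3 : dist y y0 < ε := by
      rw [Real.dist_eq, abs_sub_lt_iff]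
      constructor <;> [linarith [hy.2]; linarith [hy.1]]
    have hd : dist ((x', u, y) : ℝ × ℝ × ℝ) (x0, u0, y0) < ε := by
      calc dist ((x', u, y) : ℝ × ℝ × ℝ) (x0, u0, y0)
          = max (dist x' x0) (max (dist u u0) (dist y y0)) := by
            rw [Prod.dist_eq, Prod.dist_eq]
        _ < ε := max_lt h1 (max_lt h2 h3)
    exact (hball hd).le
  have hmpos : 0 < c * ((u0 + δ) - (u0 - δ)) * ((y0 + δ) - (y0 - δ)) := by
    have e : c * ((u0 + δ) - (u0 - δ)) * ((y0 + δ) - (y0 - δ)) = c * (2*δ) * (2*δ) := by ring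
    rw [e]; positivity
  -- conclude by continuity and density of good points
  by_contra hnot
  push_neg at hnot
  have hfx0 : f x0 < c * ((u0 + δ) - (u0 - δ)) * ((y0 + δ) - (y0 - δ)) :=
    lt_of_le_of_lt hnot hmpos
  have hVopen : IsOpen (Ioo (x0 - δ) (x0 + δ) ∩
      {x : ℝ | f x < c * ((u0 + δ) - (u0 - δ)) * ((y0 + δ) - (y0 - δ))}) :=
    isOpen_Ioo.inter (isOpen_lt hfc continuous_const)
  have hx0V : x0 ∈ Ioo (x0 - δ) (x0 + δ) ∩
      {x : ℝ | f x < c * ((u0 + δ) - (u0 - δ)) * ((y0 + δ) - (y0 - δ))} :=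
    ⟨⟨by linarith, by linarith⟩, hfx0⟩
  have hVnull : volume (Ioo (x0 - δ) (x0 + δ) ∩
      {x : ℝ | f x < c * ((u0 + δ) - (u0 - δ)) * ((y0 + δ) - (y0 - δ))}) = 0 := by
    refine measure_mono_null ?_ (ae_iff.mp hgood)
    intro x' hx'
    simp only [mem_setOf_eq]
    intro hAx'
    have h1 : |x' - x0| < δ := by
      rw [abs_sub_lt_iff]
      constructor <;> [linarith [hx'.1.2]; linarith [hx'.1.1]]
    exact absurd hx'.2 (not_lt.mpr (hm x' h1 hAx'))
  exact (ne_of_gt (hVopen.measure_pos volume ⟨x0, hx0V⟩)) hVnull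
end
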